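/- arXiv:2108.08512 — 5 statements merged into one kernel-verified Lean document; each statement's English description precedes it below -/
import Mathlib

section
/- Lemma A.3 (Maximal Bernstein inequality in first-moment form): Let F be a finite index set and let (Q_i(f))_{f∈F}, i = 1,…,m, be random vectors that are independent across i, with E Q_i(f) = 0 for all i and f, (1/m) Σ_{i=1}^m E|Q_i(f)| ≤ σ_Q for every f ∈ F, and |Q_i(f)| ≤ M_Q almost surely for all i, f. Then there exists a universal constant c > 0 such that E[ max_{f∈F} | (1/m) Σ_{i=1}^m Q_i(f) | ] ≤ c ( σ_Q + M_Q H / m ), where H = 1 ∨ log|F|. -/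
open Filter Set
open scoped ENNReal NNReal Topology

section
open MeasureTheory ProbabilityTheory


lemma my_exp_le_one_add_add_sq {x : ℝ} (hx : |x| ≤ 1) : Real.exp x ≤ 1 + x + x ^ 2 := by
  have h := Real.exp_bound hx (n := 2) (by norm_num)
  have h2 : ∑ m ∈ Finset.range 2, x ^ m / m.factorial = 1 + x := by
    simp [Finset.sum_range_succ]
  rw [h2] at h
  have h3 : |x| ^ 2 = x ^ 2 := by rw [sq_abs]
  rw [h3] at h
  have h5 := (abs_sub_le_iff.1 h).1
  have h6 : ((Nat.succ 2 : ℕ) : ℝ) / ((Nat.factorial 2 : ℕ) * (2:ℕ)) = 3/4 := by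
    norm_num [Nat.factorial]
  rw [h6] at h5
  nlinarith [sq_nonneg x]

lemma my_mgf_single {Ω : Type} [MeasurableSpace Ω] (μ : Measure Ω) [IsProbabilityMeasure μ]
    {X : Ω → ℝ} {M t : ℝ} (hX : Measurable X) (hint : Integrable X μ)
    (hzero : ∫ ω, X ω ∂μ = 0) (hb : ∀ᵐ ω ∂μ, |X ω| ≤ M) (ht : |t| * M ≤ 1) :
    ∫ ω, Real.exp (t * X ω) ∂μ ≤ Real.exp (t ^ 2 * M * ∫ ω, |X ω| ∂μ) := by
  have hMnn : 0 ≤ M := by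
    obtain ⟨ω, hω⟩ := hb.exists
    exact (abs_nonneg _).trans hω
  have hae : ∀ᵐ ω ∂μ, |t * X ω| ≤ 1 := by
    filter_upwards [hb] with ω hω
    rw [abs_mul]
    calc |t| * |X ω| ≤ |t| * M := by gcongr
    _ ≤ 1 := ht
  have hmeasE : Measurable fun ω => Real.exp (t * X ω) := (hX.const_mul t).exp
  have hintE : Integrable (fun ω => Real.exp (t * X ω)) μ := by
    refine (integrable_const (Real.exp 1)).mono' hmeasE.aestronglyMeasurable ?_
    filter_upwards [hae] with ω hω
    rw [Real.norm_eq_abs, abs_of_pos (Real.exp_pos _)]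
    exact Real.exp_le_exp.2 ((le_abs_self _).trans hω)
  have hintSq : Integrable (fun ω => X ω ^ 2) μ := by
    refine ((hint.abs.const_mul M)).mono' (hX.pow_const 2).aestronglyMeasurable ?_
    filter_upwards [hb] with ω hω
    rw [Real.norm_eq_abs, abs_of_nonneg (sq_nonneg _)]
    calc X ω ^ 2 = |X ω| * |X ω| := by rw [sq, abs_mul_abs_self]
    _ ≤ M * |X ω| := by gcongr
  have hstep1 : ∫ ω, Real.exp (t * X ω) ∂μ ≤ ∫ ω, (1 + t * X ω + t ^ 2 * X ω ^ 2) ∂μ := by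
    refine integral_mono_ae hintE ?_ ?_
    · exact (integrable_const 1).add (hint.const_mul t) |>.add (hintSq.const_mul (t ^ 2))
    · filter_upwards [hae] with ω hω
      calc Real.exp (t * X ω) ≤ 1 + t * X ω + (t * X ω) ^ 2 := my_exp_le_one_add_add_sq hω
      _ = 1 + t * X ω + t ^ 2 * X ω ^ 2 := by ring
  have hstep2 : ∫ ω, (1 + t * X ω + t ^ 2 * X ω ^ 2) ∂μ
      = 1 + t ^ 2 * ∫ ω, X ω ^ 2 ∂μ := by
    have i1 : Integrable (fun ω => 1 + t * X ω) μ := (integrable_const 1).add (hint.const_mul t)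
    have i2 : Integrable (fun ω => t ^ 2 * X ω ^ 2) μ := hintSq.const_mul (t ^ 2)
    rw [integral_add i1 i2, integral_add (integrable_const 1) (hint.const_mul t), integral_const,
      integral_const_mul, integral_const_mul, hzero]
    simp
  have hstep3 : ∫ ω, X ω ^ 2 ∂μ ≤ M * ∫ ω, |X ω| ∂μ := by
    rw [← integral_const_mul]
    refine integral_mono_ae hintSq (hint.abs.const_mul M) ?_
    filter_upwards [hb] with ω hω
    calc X ω ^ 2 = |X ω| * |X ω| := by rw [sq, abs_mul_abs_self]
    _ ≤ M * |X ω| := by gcongr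
  calc ∫ ω, Real.exp (t * X ω) ∂μ ≤ 1 + t ^ 2 * ∫ ω, X ω ^ 2 ∂μ := hstep1.trans_eq hstep2
  _ ≤ 1 + t ^ 2 * (M * ∫ ω, |X ω| ∂μ) := by nlinarith [sq_nonneg t, hstep3]
  _ = t ^ 2 * M * (∫ ω, |X ω| ∂μ) + 1 := by ring
  _ ≤ Real.exp (t ^ 2 * M * ∫ ω, |X ω| ∂μ) := Real.add_one_le_exp _

/-- **Lemma A.3 (Maximal Bernstein inequality in first-moment form).**
There is a universal constant `c > 0` such that for any finite index set `F` and random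
vectors `(Q_i(f))_{f∈F}`, `i = 1,…,m`, independent across `i`, centered, with
`(1/m) Σ_i E|Q_i(f)| ≤ σ_Q` and `|Q_i(f)| ≤ M_Q` a.s., one has
`E[max_f |(1/m) Σ_i Q_i(f)|] ≤ c (σ_Q + M_Q H / m)` where `H = 1 ∨ log |F|`. -/
theorem maximal_bernstein_first_moment :
    ∃ c : ℝ, 0 < c ∧
      ∀ (Ω : Type) (_ : MeasurableSpace Ω) (μ : Measure Ω), IsProbabilityMeasure μ →
      ∀ (ι : Type) (_ : Fintype ι) (_ : Nonempty ι)
        (m : ℕ), 0 < m →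
      ∀ (Q : ℕ → ι → Ω → ℝ),
        (∀ i ∈ Finset.Icc 1 m, ∀ f, Measurable (Q i f)) →
        -- the vectors `(Q_i(f))_{f∈F}`, `i = 1,…,m`, are independent across `i`
        iIndepFun
          (fun i : Finset.Icc 1 m => fun ω => fun f => Q (i : ℕ) f ω) μ →
        (∀ i ∈ Finset.Icc 1 m, ∀ f, Integrable (Q i f) μ) →
        -- `E Q_i(f) = 0`
        (∀ i ∈ Finset.Icc 1 m, ∀ f, ∫ ω, Q i f ω ∂μ = 0) →
      ∀ (σQ MQ : ℝ),
        -- `(1/m) Σ_{i=1}^m E|Q_i(f)| ≤ σ_Q` for every `f`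
        (∀ f, ((m : ℝ))⁻¹ * ∑ i ∈ Finset.Icc 1 m, ∫ ω, |Q i f ω| ∂μ ≤ σQ) →
        -- `|Q_i(f)| ≤ M_Q` almost surely
        (∀ i ∈ Finset.Icc 1 m, ∀ f, ∀ᵐ ω ∂μ, |Q i f ω| ≤ MQ) →
        ∫ ω, (⨆ f : ι, |((m : ℝ))⁻¹ * ∑ i ∈ Finset.Icc 1 m, Q i f ω|) ∂μ ≤
          c * (σQ + MQ * max 1 (Real.log (Fintype.card ι)) / m) := by
  classical
  refine ⟨2, by norm_num, ?_⟩
  intro Ω mΩ μ hμprob ι hι hne m hm Q hmeas hindep hint hzero σQ MQ hσ hMQ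
  haveI := hne
  obtain ⟨f₀⟩ := id hne
  have hmpos : (0:ℝ) < m := by exact_mod_cast hm
  have h1m : (1:ℕ) ∈ Finset.Icc 1 m := by rw [Finset.mem_Icc]; omega
  have hσ0 : 0 ≤ σQ := by
    refine le_trans ?_ (hσ f₀)
    have h0 : 0 ≤ ∑ i ∈ Finset.Icc 1 m, ∫ ω, |Q i f₀ ω| ∂μ :=
      Finset.sum_nonneg fun i _ => integral_nonneg fun ω => abs_nonneg _
    exact mul_nonneg (by positivity) h0
  haveI : (MeasureTheory.ae μ).NeBot := ae_neBot.2 (IsProbabilityMeasure.ne_zero μ)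
  have hMQ0 : 0 ≤ MQ := by
    obtain ⟨ω, hω⟩ := (hMQ 1 h1m f₀).exists
    exact (abs_nonneg _).trans hω
  -- collected a.e. bound
  have hball : ∀ᵐ ω ∂μ, ∀ i, i ∈ Finset.Icc 1 m → ∀ f, |Q i f ω| ≤ MQ := by
    rw [ae_all_iff]
    intro i
    by_cases hi : i ∈ Finset.Icc 1 m
    · filter_upwards [ae_all_iff.2 (fun f => hMQ i hi f)] with ω hω _
      exact hω
    · filter_upwards with ω h
      exact absurd h hi
  set H : ℝ := max 1 (Real.log (Fintype.card ι)) with hH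
  rcases eq_or_lt_of_le hMQ0 with hM0 | hMpos
  · -- MQ = 0 case
    have hQ0 : (fun ω => ⨆ f : ι, |(m:ℝ)⁻¹ * ∑ i ∈ Finset.Icc 1 m, Q i f ω|)
        =ᵐ[μ] fun _ => (0:ℝ) := by
      filter_upwards [hball] with ω hω
      have hz : ∀ f : ι, |(m:ℝ)⁻¹ * ∑ i ∈ Finset.Icc 1 m, Q i f ω| = 0 := by
        intro f
        have : ∀ i ∈ Finset.Icc 1 m, Q i f ω = 0 := by
          intro i hi
          have h := hω i hi f
          rw [← hM0] at h
          exact abs_eq_zero.1 (le_antisymm h (abs_nonneg _))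
        rw [Finset.sum_congr rfl this]
        simp
      simp only [hz]
      exact ciSup_const
    rw [integral_congr_ae hQ0, integral_zero]
    rw [← hM0]
    have : (0:ℝ) * H / m = 0 := by ring
    rw [this]
    linarith
  -- main case : 0 < MQ
  set t : ℝ := MQ⁻¹ with ht
  have htpos : 0 < t := inv_pos.2 hMpos
  set T : ι → Ω → ℝ := fun f ω => ∑ i ∈ Finset.Icc 1 m, Q i f ω with hT
  have hTmeas : ∀ f, Measurable (T f) := fun f =>
    Finset.measurable_sum _ fun i hi => hmeas i hi f
  set G : Ω → ℝ := fun ω => ⨆ f : ι, |T f ω| with hG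
  have hGmeas : Measurable G := Measurable.iSup fun f => (hTmeas f).abs
  have hTb : ∀ᵐ ω ∂μ, ∀ f, |T f ω| ≤ m * MQ := by
    filter_upwards [hball] with ω hω f
    calc |T f ω| ≤ ∑ i ∈ Finset.Icc 1 m, |Q i f ω| := Finset.abs_sum_le_sum_abs _ _
    _ ≤ ∑ _i ∈ Finset.Icc 1 m, MQ := Finset.sum_le_sum fun i hi => hω i hi f
    _ = m * MQ := by
        rw [Finset.sum_const, Nat.card_Icc]
        simp [nsmul_eq_mul]
  have hG0 : ∀ ω, 0 ≤ G ω :=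
    fun ω => (abs_nonneg (T f₀ ω)).trans
      (le_ciSup (f := fun f : ι => |T f ω|) (Set.Finite.bddAbove (Set.finite_range _)) f₀)
  have hGb : ∀ᵐ ω ∂μ, G ω ≤ m * MQ := by
    filter_upwards [hTb] with ω hω
    exact ciSup_le hω
  have hGint : Integrable G μ := by
    refine (integrable_const ((m:ℝ) * MQ)).mono' hGmeas.aestronglyMeasurable ?_
    filter_upwards [hGb] with ω hω
    rw [Real.norm_eq_abs, abs_of_nonneg (hG0 ω)]
    exact hω
  -- per-summand mgf bound
  have hQemgf : ∀ (f : ι), ∀ i ∈ Finset.Icc 1 m, ∀ s : ℝ, |s| = t →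
      ∫ ω, Real.exp (s * Q i f ω) ∂μ ≤ Real.exp (t * ∫ ω, |Q i f ω| ∂μ) := by
    intro f i hi s hs
    have hcond : |s| * MQ ≤ 1 := by
      rw [hs, ht, inv_mul_cancel₀ hMpos.ne']
    have h := my_mgf_single μ (hmeas i hi f) (hint i hi f) (hzero i hi f) (hMQ i hi f) hcond
    have hexp : s ^ 2 * MQ = t := by
      rw [← sq_abs, hs, ht, sq]
      field_simp
    rwa [hexp] at h
  -- mgf of the sum
  have hmgfT : ∀ (f : ι), ∀ s : ℝ, |s| = t →
      ∫ ω, Real.exp (s * T f ω) ∂μ ≤ Real.exp (t * ((m:ℝ) * σQ)) := by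
    intro f s hs
    set X : (Finset.Icc 1 m : Finset ℕ) → Ω → ℝ := fun i ω => Q (i:ℕ) f ω with hX
    have hXindep : iIndepFun X μ :=
      hindep.comp (fun i (v : ι → ℝ) => v f) (fun i => measurable_pi_apply f)
    have hXmeas : ∀ i, Measurable (X i) := fun i => hmeas i i.2 f
    have hsum : T f = ∑ i : (Finset.Icc 1 m : Finset ℕ), X i := by
      funext ω
      rw [Finset.sum_apply]
      exact (Finset.sum_coe_sort (Finset.Icc 1 m) (fun i => Q i f ω)).symm
    have hsum_le : ∑ i ∈ Finset.Icc 1 m, ∫ ω, |Q i f ω| ∂μ ≤ (m:ℝ) * σQ := by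
      have h1 := mul_le_mul_of_nonneg_left (hσ f) hmpos.le
      rwa [← mul_assoc, mul_inv_cancel₀ hmpos.ne', one_mul] at h1
    have key : mgf (T f) μ s ≤ Real.exp (t * ((m:ℝ) * σQ)) := by
      rw [hsum, hXindep.mgf_sum hXmeas Finset.univ]
      calc ∏ i : (Finset.Icc 1 m : Finset ℕ), mgf (X i) μ s
          ≤ ∏ i : (Finset.Icc 1 m : Finset ℕ), Real.exp (t * ∫ ω, |Q (i:ℕ) f ω| ∂μ) := by
            refine Finset.prod_le_prod (fun i _ => mgf_nonneg) (fun i _ => ?_)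
            exact hQemgf f i i.2 s hs
        _ = Real.exp (∑ i : (Finset.Icc 1 m : Finset ℕ), t * ∫ ω, |Q (i:ℕ) f ω| ∂μ) := by
            rw [Real.exp_sum]
        _ ≤ Real.exp (t * ((m:ℝ) * σQ)) := by
            rw [Real.exp_le_exp, ← Finset.mul_sum,
              Finset.sum_coe_sort (Finset.Icc 1 m) (fun i => ∫ ω, |Q i f ω| ∂μ)]
            exact mul_le_mul_of_nonneg_left hsum_le htpos.le
    exact key
  -- integrability of exp(s * T f)
  have hintexpT : ∀ (f : ι), ∀ s : ℝ, |s| = t →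
      Integrable (fun ω => Real.exp (s * T f ω)) μ := by
    intro f s hs
    refine (integrable_const (Real.exp (t * ((m:ℝ) * MQ)))).mono'
      (((hTmeas f).const_mul s).exp).aestronglyMeasurable ?_
    filter_upwards [hTb] with ω hω
    rw [Real.norm_eq_abs, abs_of_pos (Real.exp_pos _), Real.exp_le_exp]
    calc s * T f ω ≤ |s * T f ω| := le_abs_self _
    _ = t * |T f ω| := by rw [abs_mul, hs]
    _ ≤ t * ((m:ℝ) * MQ) := mul_le_mul_of_nonneg_left (hω f) htpos.le
  have hst : |t| = t := abs_of_pos htpos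
  have hst' : |(-t)| = t := by rw [abs_neg]; exact hst
  -- pointwise key bound
  have hkey : ∀ ω, Real.exp (t * G ω) ≤
      ∑ f : ι, (Real.exp (t * T f ω) + Real.exp (-t * T f ω)) := by
    intro ω
    obtain ⟨g, hg⟩ := Finite.exists_max (fun f : ι => |T f ω|)
    have h1 : G ω ≤ |T g ω| := ciSup_le hg
    have h2 : Real.exp (t * G ω) ≤ Real.exp (t * |T g ω|) := by
      rw [Real.exp_le_exp]
      exact mul_le_mul_of_nonneg_left h1 htpos.le
    have h3 : Real.exp (t * |T g ω|) ≤ Real.exp (t * T g ω) + Real.exp (-t * T g ω) := by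
      rcases abs_cases (T g ω) with ⟨he, _⟩ | ⟨he, _⟩
      · rw [he]
        exact le_add_of_nonneg_right (Real.exp_pos _).le
      · rw [he, mul_neg, ← neg_mul]
        exact le_add_of_nonneg_left (Real.exp_pos _).le
    refine (h2.trans h3).trans ?_
    refine Finset.single_le_sum (f := fun f : ι => Real.exp (t * T f ω) + Real.exp (-t * T f ω))
      (fun f _ => by positivity) (Finset.mem_univ g)
  -- integrability of exp(t * G)
  have hintexpG : Integrable (fun ω => Real.exp (t * G ω)) μ := by
    refine (integrable_const (Real.exp (t * ((m:ℝ) * MQ)))).mono'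
      ((hGmeas.const_mul t).exp).aestronglyMeasurable ?_
    filter_upwards [hGb] with ω hω
    rw [Real.norm_eq_abs, abs_of_pos (Real.exp_pos _), Real.exp_le_exp]
    exact mul_le_mul_of_nonneg_left hω htpos.le
  -- Jensen
  have hJ : Real.exp (t * ∫ ω, G ω ∂μ) ≤ ∫ ω, Real.exp (t * G ω) ∂μ := by
    have h := convexOn_exp.map_integral_le Real.continuous_exp.continuousOn isClosed_univ
      (Filter.Eventually.of_forall fun ω => Set.mem_univ _) (hGint.const_mul t) hintexpG
    rwa [integral_const_mul] at h
  -- sum bound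
  have hchain : ∫ ω, Real.exp (t * G ω) ∂μ
      ≤ (Fintype.card ι : ℝ) * (2 * Real.exp (t * ((m:ℝ) * σQ))) := by
    have hintsum : Integrable
        (fun ω => ∑ f : ι, (Real.exp (t * T f ω) + Real.exp (-t * T f ω))) μ :=
      integrable_finset_sum _ fun f _ => (hintexpT f t hst).add (hintexpT f (-t) hst')
    calc ∫ ω, Real.exp (t * G ω) ∂μ
        ≤ ∫ ω, ∑ f : ι, (Real.exp (t * T f ω) + Real.exp (-t * T f ω)) ∂μ :=
          integral_mono_ae hintexpG hintsum (Filter.Eventually.of_forall hkey)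
      _ = ∑ f : ι, ∫ ω, (Real.exp (t * T f ω) + Real.exp (-t * T f ω)) ∂μ := by
          rw [integral_finset_sum]
          exact fun f _ => (hintexpT f t hst).add (hintexpT f (-t) hst')
      _ = ∑ f : ι, ((∫ ω, Real.exp (t * T f ω) ∂μ) + ∫ ω, Real.exp (-t * T f ω) ∂μ) :=
          Finset.sum_congr rfl fun f _ =>
            integral_add (hintexpT f t hst) (hintexpT f (-t) hst')
      _ ≤ ∑ _f : ι, (Real.exp (t * ((m:ℝ) * σQ)) + Real.exp (t * ((m:ℝ) * σQ))) :=
          Finset.sum_le_sum fun f _ => add_le_add (hmgfT f t hst) (hmgfT f (-t) hst')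
      _ = (Fintype.card ι : ℝ) * (2 * Real.exp (t * ((m:ℝ) * σQ))) := by
          rw [Finset.sum_const, Finset.card_univ, nsmul_eq_mul]
          ring
  have hcard : (0:ℝ) < (Fintype.card ι : ℝ) := by exact_mod_cast Fintype.card_pos
  have hB : (0:ℝ) < (Fintype.card ι : ℝ) * (2 * Real.exp (t * ((m:ℝ) * σQ))) := by positivity
  have hlog : t * ∫ ω, G ω ∂μ ≤
      Real.log ((Fintype.card ι : ℝ) * (2 * Real.exp (t * ((m:ℝ) * σQ)))) :=
    (Real.le_log_iff_exp_le hB).2 (hJ.trans hchain)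
  have hlogeq : Real.log ((Fintype.card ι : ℝ) * (2 * Real.exp (t * ((m:ℝ) * σQ))))
      = Real.log (Fintype.card ι) + (Real.log 2 + t * ((m:ℝ) * σQ)) := by
    rw [Real.log_mul hcard.ne' (by positivity), Real.log_mul (by norm_num) (Real.exp_pos _).ne',
      Real.log_exp]
  rw [hlogeq] at hlog
  -- deduce the bound on ∫ G
  have hGfinal : ∫ ω, G ω ∂μ ≤ MQ * (Real.log (Fintype.card ι) + Real.log 2) + (m:ℝ) * σQ := by
    have h1 := mul_le_mul_of_nonneg_left hlog hMpos.le
    rw [ht] at h1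
    rw [← mul_assoc, mul_inv_cancel₀ hMpos.ne', one_mul] at h1
    calc ∫ ω, G ω ∂μ ≤ MQ * (Real.log (Fintype.card ι) + (Real.log 2 + MQ⁻¹ * ((m:ℝ) * σQ))) := h1
    _ = MQ * (Real.log (Fintype.card ι) + Real.log 2) + (m:ℝ) * σQ := by
        field_simp
        ring
  -- rewrite LHS
  have hLHS : (∫ ω, (⨆ f : ι, |(m:ℝ)⁻¹ * ∑ i ∈ Finset.Icc 1 m, Q i f ω|) ∂μ)
      = (m:ℝ)⁻¹ * ∫ ω, G ω ∂μ := by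
    rw [← integral_const_mul]
    refine integral_congr_ae (Filter.Eventually.of_forall fun ω => ?_)
    refine Eq.trans (iSup_congr fun f => ?_)
      (Real.mul_iSup_of_nonneg (by positivity) fun f => |T f ω|).symm
    rw [abs_mul, abs_of_nonneg (by positivity : (0:ℝ) ≤ (m:ℝ)⁻¹)]
  rw [hLHS]
  -- final arithmetic
  have hH1 : 1 ≤ H := le_max_left _ _
  have hL1H : Real.log (Fintype.card ι) ≤ H := le_max_right _ _
  have hlog2 : Real.log 2 ≤ 1 := by
    have := Real.log_le_sub_one_of_pos (by norm_num : (0:ℝ) < 2)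
    linarith
  have hmain : (m:ℝ)⁻¹ * ∫ ω, G ω ∂μ
      ≤ (m:ℝ)⁻¹ * (MQ * (Real.log (Fintype.card ι) + Real.log 2) + (m:ℝ) * σQ) :=
    mul_le_mul_of_nonneg_left hGfinal (by positivity)
  have hmm : (m:ℝ)⁻¹ * ((m:ℝ) * σQ) = σQ := by field_simp
  have h2H : Real.log (Fintype.card ι) + Real.log 2 ≤ 2 * H := by linarith
  have hstep : (m:ℝ)⁻¹ * (MQ * (Real.log (Fintype.card ι) + Real.log 2))
      ≤ (m:ℝ)⁻¹ * (MQ * (2 * H)) := by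
    have := mul_le_mul_of_nonneg_left h2H hMQ0
    exact mul_le_mul_of_nonneg_left this (by positivity)
  have hdiv : MQ * H / (m:ℝ) = (m:ℝ)⁻¹ * (MQ * H) := by ring
  calc (m:ℝ)⁻¹ * ∫ ω, G ω ∂μ
      ≤ (m:ℝ)⁻¹ * (MQ * (Real.log (Fintype.card ι) + Real.log 2) + (m:ℝ) * σQ) := hmain
    _ = (m:ℝ)⁻¹ * (MQ * (Real.log (Fintype.card ι) + Real.log 2)) + σQ := by
        rw [mul_add, hmm]
    _ ≤ (m:ℝ)⁻¹ * (MQ * (2 * H)) + σQ := by linarith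
    _ ≤ 2 * (σQ + MQ * H / (m:ℝ)) := by
        rw [hdiv]
        nlinarith [hσ0]

end
end

section
/- Lemma A.4 (Maximal inequality for martingale empirical processes via Freedman/Pinelis): Let F be a finite class of measurable functions f : (ℝ^d)^{ℕ₀} × [0,1] → ℝ with sup_{f∈F} ‖f‖_∞ ≤ M. Then for every R > 0 there is a universal constant c > 0 such that E[ max_{f∈F} |G_n^{(1)}(f)| · 1{R_n(f)² ≤ R²} ] ≤ c { R √H + M H / √n }, where H = 1 ∨ log|F|. -/
open Filter Set
open scoped ENNReal NNReal Topology

section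
open MeasureTheory

/-- The martingale part of the empirical process,
`G_n^{(1)}(f) = n^{-1/2} Σ_{i=1}^n {f(Z_i, i/n) - E[f(Z_i, i/n) | G_{i-1}]}`. -/
noncomputable def Gn1f {Ω : Type*} [MeasurableSpace Ω] (μ : Measure Ω) (n : ℕ)
    (G : ℕ → MeasurableSpace Ω) {d : ℕ} (Z : ℕ → Ω → (ℕ → Fin d → ℝ))
    (g : (ℕ → Fin d → ℝ) → ℝ → ℝ) : Ω → ℝ := fun ω =>
  (Real.sqrt n)⁻¹ * ∑ i ∈ Finset.Icc 1 n,
    (g (Z i ω) ((i : ℝ) / n) - (μ[(fun ω' => g (Z i ω') ((i : ℝ) / n)) | G (i - 1)]) ω)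

/-- The conditional variance `R_n(f)² = (1/n) Σ_{i=1}^n E[f(Z_i, i/n)² | G_{i-1}]`. -/
noncomputable def Rn2f {Ω : Type*} [MeasurableSpace Ω] (μ : Measure Ω) (n : ℕ)
    (G : ℕ → MeasurableSpace Ω) {d : ℕ} (Z : ℕ → Ω → (ℕ → Fin d → ℝ))
    (g : (ℕ → Fin d → ℝ) → ℝ → ℝ) : Ω → ℝ := fun ω =>
  ((n : ℝ))⁻¹ * ∑ i ∈ Finset.Icc 1 n,
    (μ[(fun ω' => (g (Z i ω') ((i : ℝ) / n))^2) | G (i - 1)]) ω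


set_option maxHeartbeats 1600000

section Helpers
open MeasureTheory

lemma exp_le_quad_of_nonpos {t : ℝ} (ht : t ≤ 0) : Real.exp t ≤ 1 + t + t^2/2 := by
  have hderiv : ∀ s : ℝ, HasDerivAt (fun s : ℝ => 1 + s + s^2/2 - Real.exp s)
      (1 + s - Real.exp s) s := by
    intro s
    have h1 : HasDerivAt (fun s : ℝ => 1 + s + s^2/2 - Real.exp s)
        (0 + 1 + (↑2 * s^1 * 1)/2 - Real.exp s) s :=
      (((hasDerivAt_const s (1:ℝ)).add (hasDerivAt_id s)).add
        (((hasDerivAt_id s).pow 2).div_const 2)).sub (Real.hasDerivAt_exp s)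
    convert h1 using 1; push_cast; ring
  have key : AntitoneOn (fun s : ℝ => 1 + s + s^2/2 - Real.exp s) (Set.Iic 0) := by
    apply antitoneOn_of_deriv_nonpos (convex_Iic 0)
    · exact Continuous.continuousOn (by continuity)
    · exact fun s _ => ((hderiv s).differentiableAt).differentiableWithinAt
    · intro s _
      rw [(hderiv s).deriv]
      have := Real.add_one_le_exp s
      linarith
  have h := key (Set.mem_Iic.2 ht) (Set.mem_Iic.2 le_rfl) ht
  simp only [Real.exp_zero] at h
  norm_num at h
  linarith

lemma exp_le_quad_of_nonneg {t : ℝ} (ht : 0 ≤ t) : Real.exp t ≤ 1 + t + t^2/2 * Real.exp t := by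
  have hderiv : ∀ s : ℝ, HasDerivAt (fun s : ℝ => 1 + s + s^2/2 * Real.exp t - Real.exp s)
      (1 + s * Real.exp t - Real.exp s) s := by
    intro s
    have h1 : HasDerivAt (fun s : ℝ => 1 + s + s^2/2 * Real.exp t - Real.exp s)
        (0 + 1 + ((↑2 * s^1 * 1)/2) * Real.exp t - Real.exp s) s :=
      (((hasDerivAt_const s (1:ℝ)).add (hasDerivAt_id s)).add
        ((((hasDerivAt_id s).pow 2).div_const 2).mul_const (Real.exp t))).sub
        (Real.hasDerivAt_exp s)
    convert h1 using 1; push_cast; ring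
  have key : MonotoneOn (fun s : ℝ => 1 + s + s^2/2 * Real.exp t - Real.exp s) (Set.Icc 0 t) := by
    apply monotoneOn_of_deriv_nonneg (convex_Icc 0 t)
    · exact Continuous.continuousOn (by continuity)
    · exact fun s _ => ((hderiv s).differentiableAt).differentiableWithinAt
    · intro s hs
      rw [interior_Icc] at hs
      obtain ⟨hs0, hst⟩ := hs
      rw [(hderiv s).deriv]
      have h2 : Real.exp s - 1 ≤ s * Real.exp s := by
        have hm : Real.exp (-s) * Real.exp s = 1 := by rw [← Real.exp_add]; simp
        have h3 := Real.add_one_le_exp (-s)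
        nlinarith [Real.exp_pos s]
      have h4 : s * Real.exp s ≤ s * Real.exp t :=
        mul_le_mul_of_nonneg_left (Real.exp_le_exp.2 hst.le) hs0.le
      linarith
  have h := key (Set.mem_Icc.2 ⟨le_rfl, ht⟩) (Set.mem_Icc.2 ⟨ht, le_rfl⟩) ht
  simp only [Real.exp_zero] at h
  norm_num at h
  linarith

/-- Master pointwise inequality: `e^t ≤ 1 + t + (t²/2) e^{|t|}`. -/
lemma exp_le_quad (t : ℝ) : Real.exp t ≤ 1 + t + t^2/2 * Real.exp |t| := by
  rcases le_or_gt t 0 with ht | ht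
  · have h1 := exp_le_quad_of_nonpos ht
    have h2 : (1:ℝ) ≤ Real.exp |t| := Real.one_le_exp (abs_nonneg t)
    nlinarith [sq_nonneg t]
  · rw [abs_of_pos ht]
    exact exp_le_quad_of_nonneg ht.le

/-- Integrability from an a.e. bound on a finite measure space. -/
lemma integrable_of_ae_bound {Ω : Type} [MeasurableSpace Ω] {μ : Measure Ω} [IsFiniteMeasure μ]
    {f : Ω → ℝ} (hf : AEStronglyMeasurable f μ) {C : ℝ} (h : ∀ᵐ ω ∂μ, |f ω| ≤ C) :
    Integrable f μ :=
  (integrable_const C).mono' hf (by simpa [Real.norm_eq_abs] using h)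


/-- Core Freedman-type exponential supermartingale bound. -/
lemma core_exp_bound {Ω : Type} {m0 : MeasurableSpace Ω} (μ : Measure Ω) [IsProbabilityMeasure μ]
    (G : ℕ → MeasurableSpace Ω) (hGle : ∀ i, G i ≤ m0) (hGm : Monotone G)
    (h : ℕ → Ω → ℝ) (hmeas : ∀ i, Measurable[G i] (h i))
    (M : ℝ) (hM0 : 0 ≤ M) (hM : ∀ i ω, |h i ω| ≤ M)
    (l : ℝ) (hl : 0 ≤ l) :
    ∀ k : ℕ, ∫ ω, Real.exp (l * ∑ i ∈ Finset.Icc 1 k, (h i ω - (μ[h i | G (i-1)]) ω)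
      - (l^2/2 * Real.exp (2*M*l)) * ∑ i ∈ Finset.Icc 1 k,
          (μ[(fun ω' => (h i ω')^2) | G (i-1)]) ω) ∂μ ≤ 1 := by
  -- general facts
  set c : ℝ := l^2/2 * Real.exp (2*M*l) with hc_def
  have hc0 : 0 ≤ c := by positivity
  have hmi : ∀ i, Measurable (h i) := fun i => (hmeas i).mono (hGle i) le_rfl
  have hint : ∀ i, Integrable (h i) μ := fun i =>
    integrable_of_ae_bound (hmi i).aestronglyMeasurable (Filter.Eventually.of_forall (hM i))
  have hsq_meas : ∀ i, Measurable (fun ω => (h i ω)^2) := fun i => (hmi i).pow_const 2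
  have hsq_bdd : ∀ i ω, |(h i ω)^2| ≤ M^2 := by
    intro i ω
    rw [abs_pow, ← sq_abs]
    exact pow_le_pow_left₀ (abs_nonneg _) (by simpa using hM i ω) 2
  have hsq_int : ∀ i, Integrable (fun ω => (h i ω)^2) μ := fun i =>
    integrable_of_ae_bound (hsq_meas i).aestronglyMeasurable
      (Filter.Eventually.of_forall (hsq_bdd i))
  have ha_bdd : ∀ i, ∀ᵐ ω ∂μ, |(μ[h i | G (i-1)]) ω| ≤ M := by
    intro i
    exact ae_bdd_condExp_of_ae_bdd (R := ⟨M, hM0⟩) (Filter.Eventually.of_forall (hM i))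
  have hq_nonneg : ∀ i, ∀ᵐ ω ∂μ, 0 ≤ (μ[(fun ω' => (h i ω')^2) | G (i-1)]) ω :=
    fun i => condExp_nonneg (Filter.Eventually.of_forall fun ω => sq_nonneg _)
  have hae : ∀ᵐ ω ∂μ, ∀ i : ℕ, |(μ[h i | G (i-1)]) ω| ≤ M ∧
      0 ≤ (μ[(fun ω' => (h i ω')^2) | G (i-1)]) ω := by
    rw [MeasureTheory.ae_all_iff]
    exact fun i => (ha_bdd i).and (hq_nonneg i)
  intro k
  induction k with
  | zero => simp
  | succ k ih =>
    -- notation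
    set a : Ω → ℝ := μ[h (k+1) | G k] with ha_def
    set q : Ω → ℝ := μ[(fun ω' => (h (k+1) ω')^2) | G k] with hq_def
    set S : Ω → ℝ := fun ω => ∑ i ∈ Finset.Icc 1 k, (h i ω - (μ[h i | G (i-1)]) ω) with hS_def
    set W : Ω → ℝ := fun ω => ∑ i ∈ Finset.Icc 1 k,
      (μ[(fun ω' => (h i ω')^2) | G (i-1)]) ω with hW_def
    set A : Ω → ℝ := fun ω => Real.exp (l * S ω - c * W ω - c * q ω) with hA_def
    set B : Ω → ℝ := fun ω => Real.exp (l * (h (k+1) ω - a ω)) with hB_def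
    have haa : ∀ᵐ ω ∂μ, |a ω| ≤ M := by
      simpa only [Nat.add_sub_cancel] using ha_bdd (k+1)
    have hqq : ∀ᵐ ω ∂μ, 0 ≤ q ω := by
      simpa only [Nat.add_sub_cancel] using hq_nonneg (k+1)
    -- the k+1 integrand equals A * B
    have hstep : ∀ ω, Real.exp (l * ∑ i ∈ Finset.Icc 1 (k+1), (h i ω - (μ[h i | G (i-1)]) ω)
        - c * ∑ i ∈ Finset.Icc 1 (k+1), (μ[(fun ω' => (h i ω')^2) | G (i-1)]) ω)
        = A ω * B ω := by
      intro ω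
      rw [Finset.sum_Icc_succ_top (Nat.succ_le_succ (Nat.zero_le k)),
          Finset.sum_Icc_succ_top (Nat.succ_le_succ (Nat.zero_le k)),
          hA_def, hB_def, ← Real.exp_add]
      simp only [Nat.add_sub_cancel]
      congr 1
      rw [hS_def, hW_def, ha_def, hq_def]
      ring
    -- measurability
    have hS_measG : Measurable[G k] S := by
      apply Finset.measurable_sum
      intro i hi
      have hik : i ≤ k := (Finset.mem_Icc.1 hi).2
      exact ((hmeas i).mono (hGm hik) le_rfl).sub
        (stronglyMeasurable_condExp.measurable.mono (hGm ((Nat.sub_le i 1).trans hik)) le_rfl)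
    have hW_measG : Measurable[G k] W := by
      apply Finset.measurable_sum
      intro i hi
      have hik : i ≤ k := (Finset.mem_Icc.1 hi).2
      exact stronglyMeasurable_condExp.measurable.mono (hGm ((Nat.sub_le i 1).trans hik)) le_rfl
    have ha_measG : Measurable[G k] a := stronglyMeasurable_condExp.measurable
    have hq_measG : Measurable[G k] q := stronglyMeasurable_condExp.measurable
    have hA_measG : Measurable[G k] A :=
      Real.measurable_exp.comp (((measurable_const.mul hS_measG).sub
        (measurable_const.mul hW_measG)).sub (measurable_const.mul hq_measG))
    have hA_meas : Measurable A := hA_measG.mono (hGle k) le_rfl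
    have hB_meas : Measurable B :=
      Real.measurable_exp.comp (measurable_const.mul
        ((hmi (k+1)).sub (ha_measG.mono (hGle k) le_rfl)))
    -- a.e. bounds
    have hA_bdd : ∀ᵐ ω ∂μ, |A ω| ≤ Real.exp (l * (2*M*k)) := by
      filter_upwards [hae, hqq] with ω hω hq0'
      rw [abs_of_pos (Real.exp_pos _), Real.exp_le_exp]
      have hSb : S ω ≤ 2*M*k := by
        rw [hS_def]
        calc ∑ i ∈ Finset.Icc 1 k, (h i ω - (μ[h i | G (i-1)]) ω)
            ≤ ∑ _i ∈ Finset.Icc 1 k, (2*M) := by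
              apply Finset.sum_le_sum
              intro i _
              have h1 := hM i ω
              have h2 := (hω i).1
              have := abs_le.1 h1
              have := abs_le.1 h2
              linarith [(abs_le.1 h1).1, (abs_le.1 h1).2, (abs_le.1 h2).1, (abs_le.1 h2).2]
          _ ≤ 2*M*k := by
              rw [Finset.sum_const]
              have : (Finset.Icc 1 k).card = k := by rw [Nat.card_Icc]; omega
              rw [this, nsmul_eq_mul]
              ring_nf
              exact le_rfl
      have hW0 : 0 ≤ W ω := Finset.sum_nonneg fun i _ => (hω i).2
      have hq0 : 0 ≤ q ω := hq0'
      nlinarith [mul_le_mul_of_nonneg_left hSb hl]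
    have hB_bdd : ∀ᵐ ω ∂μ, |B ω| ≤ Real.exp (l * (2*M)) := by
      filter_upwards [haa] with ω hω
      rw [abs_of_pos (Real.exp_pos _), Real.exp_le_exp]
      have h1 := abs_le.1 (hM (k+1) ω)
      have h2 := abs_le.1 hω
      nlinarith [h1.1, h1.2, h2.1, h2.2]
    have hAB_int : Integrable (fun ω => A ω * B ω) μ := by
      apply integrable_of_ae_bound (hA_meas.mul hB_meas).aestronglyMeasurable
        (C := Real.exp (l * (2*M*k)) * Real.exp (l * (2*M)))
      filter_upwards [hA_bdd, hB_bdd] with ω h1 h2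
      rw [Pi.mul_apply, abs_mul]
      exact mul_le_mul h1 h2 (abs_nonneg _) (Real.exp_pos _).le
    have hB_int : Integrable B μ :=
      integrable_of_ae_bound hB_meas.aestronglyMeasurable hB_bdd
    -- the conditional expectation bound : μ[B | G k] ≤ᵐ exp (c * q)
    have hcond : (μ[B | G k]) ≤ᵐ[μ] fun ω => Real.exp (c * q ω) := by
      -- φ := g0 + g1 * h(k+1) + c • h(k+1)²
      set g0 : Ω → ℝ := fun ω => 1 - l * a ω + c * (a ω)^2 with hg0_def
      set g1 : Ω → ℝ := fun ω => l - 2*c * a ω with hg1_def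
      set φ : Ω → ℝ := fun ω => g0 ω + g1 ω * h (k+1) ω + c * (h (k+1) ω)^2 with hφ_def
      have hg0_measG : Measurable[G k] g0 :=
        (measurable_const.sub (measurable_const.mul ha_measG)).add
          (measurable_const.mul (ha_measG.pow_const 2))
      have hg1_measG : Measurable[G k] g1 := measurable_const.sub (measurable_const.mul ha_measG)
      have hg0_bdd : ∀ᵐ ω ∂μ, |g0 ω| ≤ 1 + l * M + c * M^2 := by
        filter_upwards [haa] with ω hω
        simp only [hg0_def]
        have h2 := abs_le.1 hω
        have ha2 : (a ω)^2 ≤ M^2 := by nlinarith [h2.1, h2.2]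
        have f1 : l * a ω ≤ l * M := mul_le_mul_of_nonneg_left h2.2 hl
        have f2 : l * (-(a ω)) ≤ l * M := mul_le_mul_of_nonneg_left (by linarith [h2.1]) hl
        have f3 : c * (a ω)^2 ≤ c * M^2 := mul_le_mul_of_nonneg_left ha2 hc0
        have f4 : 0 ≤ c * (a ω)^2 := mul_nonneg hc0 (sq_nonneg _)
        have f5 : 0 ≤ c * M^2 := mul_nonneg hc0 (sq_nonneg _)
        rw [abs_le]
        constructor <;> nlinarith [f1, f2, f3, f4, f5]
      have hg1_bdd : ∀ᵐ ω ∂μ, |g1 ω| ≤ l + 2*c*M := by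
        filter_upwards [haa] with ω hω
        simp only [hg1_def]
        have h2 := abs_le.1 hω
        have f1 : 2*c * a ω ≤ 2*c * M := mul_le_mul_of_nonneg_left h2.2 (by positivity)
        have f2 : 2*c * (-(a ω)) ≤ 2*c * M := mul_le_mul_of_nonneg_left (by linarith [h2.1]) (by positivity)
        rw [abs_le]
        constructor <;> nlinarith [f1, f2, hl]
      have hg0_int : Integrable g0 μ :=
        integrable_of_ae_bound ((hg0_measG.mono (hGle k) le_rfl)).aestronglyMeasurable hg0_bdd
      have hg1h_int : Integrable (fun ω => g1 ω * h (k+1) ω) μ := by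
        apply integrable_of_ae_bound
          (((hg1_measG.mono (hGle k) le_rfl)).mul (hmi (k+1))).aestronglyMeasurable
          (C := (l + 2*c*M) * M)
        filter_upwards [hg1_bdd] with ω h1
        rw [Pi.mul_apply, abs_mul]
        exact mul_le_mul h1 (hM (k+1) ω) (abs_nonneg _) (by nlinarith)
      have hch2_int : Integrable (fun ω => c * (h (k+1) ω)^2) μ := (hsq_int (k+1)).const_mul c
      have hφ_int : Integrable φ μ := (hg0_int.add hg1h_int).add hch2_int
      -- B ≤ᵐ φ
      have hBφ : B ≤ᵐ[μ] φ := by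
        filter_upwards [haa] with ω hω
        have h1 := abs_le.1 (hM (k+1) ω)
        have h2 := abs_le.1 hω
        set u : ℝ := h (k+1) ω - a ω with hu_def
        have hu : |u| ≤ 2*M := by rw [abs_le]; constructor <;> [nlinarith [h1.1, h2.2]; nlinarith [h1.2, h2.1]]
        have key := exp_le_quad (l * u)
        have hexp_le : Real.exp |l * u| ≤ Real.exp (2*M*l) := by
          rw [Real.exp_le_exp, abs_mul, abs_of_nonneg hl]
          calc l * |u| ≤ l * (2*M) := mul_le_mul_of_nonneg_left hu hl
            _ = 2*M*l := by ring
        have : Real.exp (l*u) ≤ 1 + l*u + (l*u)^2/2 * Real.exp (2*M*l) := by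
          have h5 : (l*u)^2/2 * Real.exp |l*u| ≤ (l*u)^2/2 * Real.exp (2*M*l) :=
            mul_le_mul_of_nonneg_left hexp_le (by positivity)
          linarith
        calc B ω = Real.exp (l * u) := rfl
          _ ≤ 1 + l*u + (l*u)^2/2 * Real.exp (2*M*l) := this
          _ = φ ω := by rw [hφ_def, hg0_def, hg1_def, hc_def]; simp only []; ring
      -- condexp of φ
      have hφ_ce : μ[φ | G k] =ᵐ[μ] fun ω => g0 ω + g1 ω * a ω + c * q ω := by
        have e1 : μ[φ | G k] =ᵐ[μ]
            μ[fun ω => g0 ω + g1 ω * h (k+1) ω | G k] + μ[fun ω => c * (h (k+1) ω)^2 | G k] := by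
          have := condExp_add (μ := μ) (m := G k) (hg0_int.add hg1h_int) hch2_int
          exact this
        have e2 : μ[fun ω => g0 ω + g1 ω * h (k+1) ω | G k] =ᵐ[μ]
            μ[g0 | G k] + μ[fun ω => g1 ω * h (k+1) ω | G k] :=
          condExp_add hg0_int hg1h_int (G k)
        have e3 : μ[g0 | G k] = g0 :=
          condExp_of_stronglyMeasurable (hGle k) hg0_measG.stronglyMeasurable hg0_int
        have e4 : μ[fun ω => g1 ω * h (k+1) ω | G k] =ᵐ[μ] fun ω => g1 ω * a ω := by
          have := condExp_stronglyMeasurable_mul_of_bound (hGle k) hg1_measG.stronglyMeasurable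
            (hint (k+1)) (l + 2*c*M) (by simpa [Real.norm_eq_abs] using hg1_bdd)
          filter_upwards [this] with ω hω
          exact hω
        have e5 : μ[fun ω => c * (h (k+1) ω)^2 | G k] =ᵐ[μ] fun ω => c * q ω := by
          have h6 : (fun ω => c * (h (k+1) ω)^2) = c • (fun ω => (h (k+1) ω)^2) := by
            funext ω; simp [smul_eq_mul]
          rw [h6]
          have := condExp_smul (μ := μ) (m := G k) (𝕜 := ℝ) c (fun ω => (h (k+1) ω)^2)
          filter_upwards [this] with ω hω
          simpa [smul_eq_mul] using hω
        filter_upwards [e1, e2, e4, e5] with ω k1 k2 k4 k5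
        simp only [Pi.add_apply] at k1 k2
        rw [k1, k2, e3, k4, k5]
      -- combine
      have step2 : μ[B | G k] ≤ᵐ[μ] μ[φ | G k] := condExp_mono hB_int hφ_int hBφ
      filter_upwards [step2, hφ_ce, hqq] with ω h1 h2 hq0
      rw [h2] at h1
      have hval : g0 ω + g1 ω * a ω + c * q ω = 1 + c * q ω - c * (a ω)^2 := by
        rw [hg0_def, hg1_def]; simp only []; ring
      have : g0 ω + g1 ω * a ω + c * q ω ≤ Real.exp (c * q ω) := by
        rw [hval]
        have := Real.add_one_le_exp (c * q ω)
        nlinarith [sq_nonneg (a ω)]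
      linarith
    -- put it together
    have hpull : μ[fun ω => A ω * B ω | G k] =ᵐ[μ] fun ω => A ω * (μ[B | G k]) ω := by
      have := condExp_stronglyMeasurable_mul_of_bound (hGle k) hA_measG.stronglyMeasurable
        hB_int (Real.exp (l * (2*M*k))) (by simpa [Real.norm_eq_abs] using hA_bdd)
      filter_upwards [this] with ω hω
      exact hω
    have hleft_int : Integrable (fun ω => A ω * (μ[B | G k]) ω) μ :=
      (integrable_condExp (f := fun ω => A ω * B ω) (m := G k)).congr hpull
    have hright_int : Integrable (fun ω => Real.exp (l * S ω - c * W ω)) μ := by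
      apply integrable_of_ae_bound
        (((measurable_const.mul (hS_measG.mono (hGle k) le_rfl)).sub
          (measurable_const.mul (hW_measG.mono (hGle k) le_rfl))).exp).aestronglyMeasurable
        (C := Real.exp (l * (2*M*k)))
      filter_upwards [hae] with ω hω
      rw [abs_of_pos (Real.exp_pos _), Real.exp_le_exp]
      have hSb : S ω ≤ 2*M*k := by
        rw [hS_def]
        calc ∑ i ∈ Finset.Icc 1 k, (h i ω - (μ[h i | G (i-1)]) ω)
            ≤ ∑ _i ∈ Finset.Icc 1 k, (2*M) := by
              apply Finset.sum_le_sum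
              intro i _
              have h1 := abs_le.1 (hM i ω)
              have h2 := abs_le.1 (hω i).1
              linarith [h1.1, h1.2, h2.1, h2.2]
          _ ≤ 2*M*k := by
              rw [Finset.sum_const]
              have : (Finset.Icc 1 k).card = k := by rw [Nat.card_Icc]; omega
              rw [this, nsmul_eq_mul]; ring_nf; exact le_rfl
      have hW0 : 0 ≤ W ω := Finset.sum_nonneg fun i _ => (hω i).2
      simp only [Pi.sub_apply, Pi.mul_apply]
      nlinarith [mul_le_mul_of_nonneg_left hSb hl]
    calc ∫ ω, Real.exp (l * ∑ i ∈ Finset.Icc 1 (k+1), (h i ω - (μ[h i | G (i-1)]) ω)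
            - c * ∑ i ∈ Finset.Icc 1 (k+1), (μ[(fun ω' => (h i ω')^2) | G (i-1)]) ω) ∂μ
        = ∫ ω, A ω * B ω ∂μ := by simp_rw [hstep]
      _ = ∫ ω, (μ[fun ω' => A ω' * B ω' | G k]) ω ∂μ := (integral_condExp (hGle k)).symm
      _ = ∫ ω, A ω * (μ[B | G k]) ω ∂μ := integral_congr_ae hpull
      _ ≤ ∫ ω, Real.exp (l * S ω - c * W ω) ∂μ := by
          apply integral_mono_ae hleft_int hright_int
          filter_upwards [hcond] with ω h1
          calc A ω * (μ[B | G k]) ω ≤ A ω * Real.exp (c * q ω) :=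
                mul_le_mul_of_nonneg_left h1 (Real.exp_pos _).le
            _ = Real.exp (l * S ω - c * W ω) := by
                rw [hA_def]; simp only []; rw [← Real.exp_add]; congr 1; ring
      _ ≤ 1 := ih


section PerG
variable {Ω : Type} {m0 : MeasurableSpace Ω} (μ : Measure Ω) [IsProbabilityMeasure μ]
    (n : ℕ) (G : ℕ → MeasurableSpace Ω) {d : ℕ} (Z : ℕ → Ω → (ℕ → Fin d → ℝ))
    (g : (ℕ → Fin d → ℝ) → ℝ → ℝ)

lemma hg_meas {Ω : Type} (G : ℕ → MeasurableSpace Ω) {d : ℕ} (Z : ℕ → Ω → (ℕ → Fin d → ℝ))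
    (g : (ℕ → Fin d → ℝ) → ℝ → ℝ) (n : ℕ)
    (hZ : ∀ i, Measurable[G i] (Z i))
    (hg : Measurable (Function.uncurry g)) (i : ℕ) :
    Measurable[G i] (fun ω => g (Z i ω) ((i : ℝ) / n)) := by
  exact hg.comp ((hZ i).prodMk measurable_const)

lemma gn1f_meas (hGle : ∀ i, G i ≤ m0) (hZ : ∀ i, Measurable[G i] (Z i))
    (hg : Measurable (Function.uncurry g)) : Measurable (Gn1f μ n G Z g) := by
  apply Measurable.const_mul
  apply Finset.measurable_sum
  intro i _
  exact ((hg_meas G Z g n hZ hg i).mono (hGle i) le_rfl).sub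
    (stronglyMeasurable_condExp.measurable.mono (hGle (i-1)) le_rfl)

lemma rn2f_meas (hGle : ∀ i, G i ≤ m0) : Measurable (Rn2f μ n G Z g) := by
  apply Measurable.const_mul
  apply Finset.measurable_sum
  intro i _
  exact stronglyMeasurable_condExp.measurable.mono (hGle (i-1)) le_rfl

/-- a.e. bound for `|Gn1f|`. -/
lemma gn1f_bdd (hGle : ∀ i, G i ≤ m0) {M : ℝ}
    (hM : ∀ z u, |g z u| ≤ M) :
    ∀ᵐ ω ∂μ, |Gn1f μ n G Z g ω| ≤ (Real.sqrt n)⁻¹ * (n * (2*M)) := by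
  have hbd : ∀ i : ℕ, ∀ᵐ ω ∂μ, |(μ[(fun ω' => g (Z i ω') ((i : ℝ) / n)) | G (i-1)]) ω| ≤ M := by
    intro i
    have hM0 : 0 ≤ M := le_trans (abs_nonneg _) (hM (fun _ _ => 0) 0)
    exact ae_bdd_condExp_of_ae_bdd (R := ⟨M, hM0⟩)
      (Filter.Eventually.of_forall (fun ω => hM _ _))
  rw [← MeasureTheory.ae_all_iff] at hbd
  filter_upwards [hbd] with ω hω
  rw [Gn1f, abs_mul, abs_inv, abs_of_nonneg (Real.sqrt_nonneg _)]
  apply mul_le_mul_of_nonneg_left _ (inv_nonneg.2 (Real.sqrt_nonneg _))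
  calc |∑ i ∈ Finset.Icc 1 n, (g (Z i ω) ((i : ℝ) / n)
          - (μ[(fun ω' => g (Z i ω') ((i : ℝ) / n)) | G (i - 1)]) ω)|
      ≤ ∑ i ∈ Finset.Icc 1 n, |g (Z i ω) ((i : ℝ) / n)
          - (μ[(fun ω' => g (Z i ω') ((i : ℝ) / n)) | G (i - 1)]) ω| :=
        Finset.abs_sum_le_sum_abs _ _
    _ ≤ ∑ _i ∈ Finset.Icc 1 n, (2*M) := by
        apply Finset.sum_le_sum
        intro i _
        have h1 := abs_le.1 (hM (Z i ω) ((i : ℝ) / n))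
        have h2 := abs_le.1 (hω i)
        rw [abs_le]
        constructor <;> [linarith [h1.1, h2.2]; linarith [h1.2, h2.1]]
    _ ≤ n * (2*M) := by
        rw [Finset.sum_const]
        have : (Finset.Icc 1 n).card = n := by rw [Nat.card_Icc]; omega
        rw [this, nsmul_eq_mul]

lemma per_g_bound {Ω : Type} {m0 : MeasurableSpace Ω} (μ : Measure Ω) [IsProbabilityMeasure μ]
    (n : ℕ) (hn : 0 < n) (G : ℕ → MeasurableSpace Ω) (hGle : ∀ i, G i ≤ m0) (hGm : Monotone G)
    {d : ℕ} (Z : ℕ → Ω → (ℕ → Fin d → ℝ)) (hZ : ∀ i, Measurable[G i] (Z i))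
    (g : (ℕ → Fin d → ℝ) → ℝ → ℝ) (hg : Measurable (Function.uncurry g))
    (M : ℝ) (hM0 : 0 ≤ M) (hM : ∀ z u, |g z u| ≤ M)
    (R : ℝ) (hR : 0 < R) (l0 : ℝ) (hl0 : 0 ≤ l0) :
    ∫ ω, Real.exp (l0 * (Set.indicator {ω' | Rn2f μ n G Z g ω' ≤ R^2}
        (fun ω' => |Gn1f μ n G Z g ω'|) ω)) ∂μ
      ≤ 1 + 2 * Real.exp (((l0/Real.sqrt n)^2/2 * Real.exp (2*M*(l0/Real.sqrt n)))
          * (n * R^2)) := by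
  set l : ℝ := l0 / Real.sqrt n with hl_def
  have hl : 0 ≤ l := div_nonneg hl0 (Real.sqrt_nonneg _)
  set c' : ℝ := l^2/2 * Real.exp (2*M*l) with hc'_def
  have hc'0 : 0 ≤ c' := by positivity
  -- core bounds, positive and negative
  have E1 : ∫ ω, Real.exp (l * ∑ i ∈ Finset.Icc 1 n, (g (Z i ω) ((i : ℝ) / n)
      - (μ[(fun ω' => g (Z i ω') ((i : ℝ) / n)) | G (i-1)]) ω)
      - c' * ∑ i ∈ Finset.Icc 1 n,
        (μ[(fun ω' => (g (Z i ω') ((i : ℝ) / n))^2) | G (i-1)]) ω) ∂μ ≤ 1 :=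
    core_exp_bound μ G hGle hGm (fun i ω => g (Z i ω) ((i : ℝ) / n))
      (fun i => hg_meas G Z g n hZ hg i) M hM0 (fun i ω => hM _ _) l hl n
  have E2' : ∫ ω, Real.exp (l * ∑ i ∈ Finset.Icc 1 n, (-(g (Z i ω) ((i : ℝ) / n))
      - (μ[(fun ω' => -(g (Z i ω') ((i : ℝ) / n))) | G (i-1)]) ω)
      - c' * ∑ i ∈ Finset.Icc 1 n,
        (μ[(fun ω' => (g (Z i ω') ((i : ℝ) / n))^2) | G (i-1)]) ω) ∂μ ≤ 1 := by
    have := core_exp_bound μ G hGle hGm (fun i ω => -(g (Z i ω) ((i : ℝ) / n)))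
      (fun i => (hg_meas G Z g n hZ hg i).neg) M hM0
      (fun i ω => by rw [abs_neg]; exact hM _ _) l hl n
    simpa only [neg_sq] using this
  have hneg : ∀ i : ℕ, (μ[(fun ω' => -(g (Z i ω') ((i : ℝ) / n))) | G (i-1)])
      =ᵐ[μ] fun ω => -((μ[(fun ω' => g (Z i ω') ((i : ℝ) / n)) | G (i-1)]) ω) :=
    fun i => condExp_neg _ _
  have E2 : ∫ ω, Real.exp (-(l * ∑ i ∈ Finset.Icc 1 n, (g (Z i ω) ((i : ℝ) / n)
      - (μ[(fun ω' => g (Z i ω') ((i : ℝ) / n)) | G (i-1)]) ω))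
      - c' * ∑ i ∈ Finset.Icc 1 n,
        (μ[(fun ω' => (g (Z i ω') ((i : ℝ) / n))^2) | G (i-1)]) ω) ∂μ ≤ 1 := by
    refine le_trans (le_of_eq (integral_congr_ae ?_)) E2'
    have hae := MeasureTheory.ae_all_iff.2 hneg
    filter_upwards [hae] with ω hω
    congr 1
    have hsum : ∑ i ∈ Finset.Icc 1 n, (-(g (Z i ω) ((i : ℝ) / n))
        - (μ[(fun ω' => -(g (Z i ω') ((i : ℝ) / n))) | G (i-1)]) ω)
        = -∑ i ∈ Finset.Icc 1 n, (g (Z i ω) ((i : ℝ) / n)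
        - (μ[(fun ω' => g (Z i ω') ((i : ℝ) / n)) | G (i-1)]) ω) := by
      rw [← Finset.sum_neg_distrib]
      refine Finset.sum_congr rfl fun i _ => ?_
      rw [hω i]; ring
    rw [hsum]; ring
  -- a.e. facts
  have hbd : ∀ᵐ ω ∂μ, ∀ i : ℕ,
      |(μ[(fun ω' => g (Z i ω') ((i : ℝ) / n)) | G (i-1)]) ω| ≤ M ∧
      0 ≤ (μ[(fun ω' => (g (Z i ω') ((i : ℝ) / n))^2) | G (i-1)]) ω := by
    rw [MeasureTheory.ae_all_iff]
    intro i
    refine (ae_bdd_condExp_of_ae_bdd (R := ⟨M, hM0⟩)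
      (Filter.Eventually.of_forall (fun ω => hM _ _))).and
      (condExp_nonneg (Filter.Eventually.of_forall fun ω => sq_nonneg _))
  -- notation-free bounds for the two exponential integrands
  have hSbdd : ∀ᵐ ω ∂μ, |∑ i ∈ Finset.Icc 1 n, (g (Z i ω) ((i : ℝ) / n)
      - (μ[(fun ω' => g (Z i ω') ((i : ℝ) / n)) | G (i-1)]) ω)| ≤ n * (2*M) := by
    filter_upwards [hbd] with ω hω
    calc |∑ i ∈ Finset.Icc 1 n, (g (Z i ω) ((i : ℝ) / n)
            - (μ[(fun ω' => g (Z i ω') ((i : ℝ) / n)) | G (i - 1)]) ω)|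
        ≤ ∑ i ∈ Finset.Icc 1 n, |g (Z i ω) ((i : ℝ) / n)
            - (μ[(fun ω' => g (Z i ω') ((i : ℝ) / n)) | G (i - 1)]) ω| :=
          Finset.abs_sum_le_sum_abs _ _
      _ ≤ ∑ _i ∈ Finset.Icc 1 n, (2*M) := by
          apply Finset.sum_le_sum
          intro i _
          have h1 := abs_le.1 (hM (Z i ω) ((i : ℝ) / n))
          have h2 := abs_le.1 (hω i).1
          rw [abs_le]
          constructor <;> [linarith [h1.1, h2.2]; linarith [h1.2, h2.1]]
      _ ≤ n * (2*M) := by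
          rw [Finset.sum_const]
          have : (Finset.Icc 1 n).card = n := by rw [Nat.card_Icc]; omega
          rw [this, nsmul_eq_mul]
  have hmeasS : Measurable (fun ω => ∑ i ∈ Finset.Icc 1 n, (g (Z i ω) ((i : ℝ) / n)
      - (μ[(fun ω' => g (Z i ω') ((i : ℝ) / n)) | G (i-1)]) ω)) := by
    apply Finset.measurable_sum
    intro i _
    exact ((hg_meas G Z g n hZ hg i).mono (hGle i) le_rfl).sub
      (stronglyMeasurable_condExp.measurable.mono (hGle (i-1)) le_rfl)
  have hmeasW : Measurable (fun ω => ∑ i ∈ Finset.Icc 1 n,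
      (μ[(fun ω' => (g (Z i ω') ((i : ℝ) / n))^2) | G (i-1)]) ω) := by
    apply Finset.measurable_sum
    intro i _
    exact stronglyMeasurable_condExp.measurable.mono (hGle (i-1)) le_rfl
  have hint1 : Integrable (fun ω => Real.exp (l * ∑ i ∈ Finset.Icc 1 n,
      (g (Z i ω) ((i : ℝ) / n) - (μ[(fun ω' => g (Z i ω') ((i : ℝ) / n)) | G (i-1)]) ω)
      - c' * ∑ i ∈ Finset.Icc 1 n,
        (μ[(fun ω' => (g (Z i ω') ((i : ℝ) / n))^2) | G (i-1)]) ω)) μ := by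
    apply integrable_of_ae_bound
      (((measurable_const.mul hmeasS).sub (measurable_const.mul hmeasW)).exp).aestronglyMeasurable
      (C := Real.exp (l * (n * (2*M))))
    filter_upwards [hSbdd, hbd] with ω h1 h2
    rw [abs_of_pos (Real.exp_pos _), Real.exp_le_exp]
    have hW0 : 0 ≤ ∑ i ∈ Finset.Icc 1 n,
        (μ[(fun ω' => (g (Z i ω') ((i : ℝ) / n))^2) | G (i-1)]) ω :=
      Finset.sum_nonneg fun i _ => (h2 i).2
    have hS := (abs_le.1 h1).2
    simp only [Pi.sub_apply, Pi.mul_apply]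
    nlinarith [mul_le_mul_of_nonneg_left hS hl]
  have hint2 : Integrable (fun ω => Real.exp (-(l * ∑ i ∈ Finset.Icc 1 n,
      (g (Z i ω) ((i : ℝ) / n) - (μ[(fun ω' => g (Z i ω') ((i : ℝ) / n)) | G (i-1)]) ω))
      - c' * ∑ i ∈ Finset.Icc 1 n,
        (μ[(fun ω' => (g (Z i ω') ((i : ℝ) / n))^2) | G (i-1)]) ω)) μ := by
    apply integrable_of_ae_bound
      ((((measurable_const.mul hmeasS).neg).sub
        (measurable_const.mul hmeasW)).exp).aestronglyMeasurable
      (C := Real.exp (l * (n * (2*M))))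
    filter_upwards [hSbdd, hbd] with ω h1 h2
    rw [abs_of_pos (Real.exp_pos _), Real.exp_le_exp]
    have hW0 : 0 ≤ ∑ i ∈ Finset.Icc 1 n,
        (μ[(fun ω' => (g (Z i ω') ((i : ℝ) / n))^2) | G (i-1)]) ω :=
      Finset.sum_nonneg fun i _ => (h2 i).2
    have hS := (abs_le.1 h1).1
    simp only [Pi.sub_apply, Pi.mul_apply, Pi.neg_apply]
    nlinarith [mul_le_mul_of_nonneg_left (neg_le.2 hS) hl]
  -- pointwise bound for the indicator exponential
  set CC : ℝ := c' * (n * R^2) with hCC_def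
  have key : ∀ᵐ ω ∂μ, Real.exp (l0 * (Set.indicator {ω' | Rn2f μ n G Z g ω' ≤ R^2}
      (fun ω' => |Gn1f μ n G Z g ω'|) ω))
      ≤ 1 + Real.exp CC * Real.exp (l * ∑ i ∈ Finset.Icc 1 n, (g (Z i ω) ((i : ℝ) / n)
          - (μ[(fun ω' => g (Z i ω') ((i : ℝ) / n)) | G (i-1)]) ω)
          - c' * ∑ i ∈ Finset.Icc 1 n,
            (μ[(fun ω' => (g (Z i ω') ((i : ℝ) / n))^2) | G (i-1)]) ω)
        + Real.exp CC * Real.exp (-(l * ∑ i ∈ Finset.Icc 1 n, (g (Z i ω) ((i : ℝ) / n)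
          - (μ[(fun ω' => g (Z i ω') ((i : ℝ) / n)) | G (i-1)]) ω))
          - c' * ∑ i ∈ Finset.Icc 1 n,
            (μ[(fun ω' => (g (Z i ω') ((i : ℝ) / n))^2) | G (i-1)]) ω) := by
    filter_upwards [hbd] with ω hω
    set S := ∑ i ∈ Finset.Icc 1 n, (g (Z i ω) ((i : ℝ) / n)
      - (μ[(fun ω' => g (Z i ω') ((i : ℝ) / n)) | G (i-1)]) ω) with hS_def
    set W := ∑ i ∈ Finset.Icc 1 n,
      (μ[(fun ω' => (g (Z i ω') ((i : ℝ) / n))^2) | G (i-1)]) ω with hW_def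
    have hW0 : 0 ≤ W := Finset.sum_nonneg fun i _ => (hω i).2
    by_cases hA : Rn2f μ n G Z g ω ≤ R^2
    · rw [Set.indicator_of_mem (by exact hA)]
      have hW_le : W ≤ n * R^2 := by
        have h1 : Rn2f μ n G Z g ω = ((n:ℝ))⁻¹ * W := rfl
        rw [h1] at hA
        have hn' : (0:ℝ) < n := Nat.cast_pos.2 hn
        calc W = n * (((n:ℝ))⁻¹ * W) := by field_simp
          _ ≤ n * R^2 := mul_le_mul_of_nonneg_left hA hn'.le
      have hGeq : Gn1f μ n G Z g ω = (Real.sqrt n)⁻¹ * S := rfl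
      have hlX : l0 * |Gn1f μ n G Z g ω| = l * |S| := by
        rw [hGeq, abs_mul, abs_inv, abs_of_nonneg (Real.sqrt_nonneg _), hl_def,
          div_eq_mul_inv]
        ring
      rw [hlX]
      have hcc : c' * W ≤ CC := by
        rw [hCC_def]
        exact mul_le_mul_of_nonneg_left hW_le hc'0
      have h1 : Real.exp (l * S) ≤ Real.exp CC * Real.exp (l * S - c' * W) := by
        rw [← Real.exp_add, Real.exp_le_exp]; linarith
      have h2 : Real.exp (-(l * S)) ≤ Real.exp CC * Real.exp (-(l * S) - c' * W) := by
        rw [← Real.exp_add, Real.exp_le_exp]; linarith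
      rcases abs_cases S with ⟨he, _⟩ | ⟨he, _⟩
      · rw [he]
        have := Real.exp_pos (-(l * S) - c' * W)
        nlinarith [Real.exp_pos CC]
      · rw [he, mul_neg]
        have := Real.exp_pos (l * S - c' * W)
        nlinarith [Real.exp_pos CC]
    · rw [Set.indicator_of_notMem (by exact hA)]
      rw [mul_zero, Real.exp_zero]
      nlinarith [Real.exp_pos CC, Real.exp_pos (l * S - c' * W),
        Real.exp_pos (-(l * S) - c' * W), mul_pos (Real.exp_pos CC) (Real.exp_pos (l * S - c' * W)),
        mul_pos (Real.exp_pos CC) (Real.exp_pos (-(l * S) - c' * W))]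
  -- integrate
  calc ∫ ω, Real.exp (l0 * (Set.indicator {ω' | Rn2f μ n G Z g ω' ≤ R^2}
        (fun ω' => |Gn1f μ n G Z g ω'|) ω)) ∂μ
      ≤ ∫ ω, (1 + Real.exp CC * Real.exp (l * ∑ i ∈ Finset.Icc 1 n, (g (Z i ω) ((i : ℝ) / n)
          - (μ[(fun ω' => g (Z i ω') ((i : ℝ) / n)) | G (i-1)]) ω)
          - c' * ∑ i ∈ Finset.Icc 1 n,
            (μ[(fun ω' => (g (Z i ω') ((i : ℝ) / n))^2) | G (i-1)]) ω)
        + Real.exp CC * Real.exp (-(l * ∑ i ∈ Finset.Icc 1 n, (g (Z i ω) ((i : ℝ) / n)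
          - (μ[(fun ω' => g (Z i ω') ((i : ℝ) / n)) | G (i-1)]) ω))
          - c' * ∑ i ∈ Finset.Icc 1 n,
            (μ[(fun ω' => (g (Z i ω') ((i : ℝ) / n))^2) | G (i-1)]) ω)) ∂μ := by
        apply integral_mono_of_nonneg (Filter.Eventually.of_forall fun ω => (Real.exp_pos _).le)
          _ key
        exact ((integrable_const 1).add (hint1.const_mul _)).add (hint2.const_mul _)
    _ ≤ 1 + Real.exp CC + Real.exp CC := by
        have I1 : Integrable (fun ω => Real.exp CC * Real.exp (l * ∑ i ∈ Finset.Icc 1 n, (g (Z i ω) ((i : ℝ) / n)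
          - (μ[(fun ω' => g (Z i ω') ((i : ℝ) / n)) | G (i-1)]) ω)
          - c' * ∑ i ∈ Finset.Icc 1 n,
            (μ[(fun ω' => (g (Z i ω') ((i : ℝ) / n))^2) | G (i-1)]) ω)) μ := hint1.const_mul _
        have I2 : Integrable (fun ω => Real.exp CC * Real.exp (-(l * ∑ i ∈ Finset.Icc 1 n, (g (Z i ω) ((i : ℝ) / n)
          - (μ[(fun ω' => g (Z i ω') ((i : ℝ) / n)) | G (i-1)]) ω))
          - c' * ∑ i ∈ Finset.Icc 1 n,
            (μ[(fun ω' => (g (Z i ω') ((i : ℝ) / n))^2) | G (i-1)]) ω)) μ := hint2.const_mul _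
        have e1 : ∫ ω, (1 + Real.exp CC * Real.exp (l * ∑ i ∈ Finset.Icc 1 n, (g (Z i ω) ((i : ℝ) / n)
          - (μ[(fun ω' => g (Z i ω') ((i : ℝ) / n)) | G (i-1)]) ω)
          - c' * ∑ i ∈ Finset.Icc 1 n,
            (μ[(fun ω' => (g (Z i ω') ((i : ℝ) / n))^2) | G (i-1)]) ω)
              + Real.exp CC * Real.exp (-(l * ∑ i ∈ Finset.Icc 1 n, (g (Z i ω) ((i : ℝ) / n)
          - (μ[(fun ω' => g (Z i ω') ((i : ℝ) / n)) | G (i-1)]) ω))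
          - c' * ∑ i ∈ Finset.Icc 1 n,
            (μ[(fun ω' => (g (Z i ω') ((i : ℝ) / n))^2) | G (i-1)]) ω)) ∂μ
            = (∫ ω, (1 + Real.exp CC * Real.exp (l * ∑ i ∈ Finset.Icc 1 n, (g (Z i ω) ((i : ℝ) / n)
          - (μ[(fun ω' => g (Z i ω') ((i : ℝ) / n)) | G (i-1)]) ω)
          - c' * ∑ i ∈ Finset.Icc 1 n,
            (μ[(fun ω' => (g (Z i ω') ((i : ℝ) / n))^2) | G (i-1)]) ω)) ∂μ)
              + ∫ ω, Real.exp CC * Real.exp (-(l * ∑ i ∈ Finset.Icc 1 n, (g (Z i ω) ((i : ℝ) / n)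
          - (μ[(fun ω' => g (Z i ω') ((i : ℝ) / n)) | G (i-1)]) ω))
          - c' * ∑ i ∈ Finset.Icc 1 n,
            (μ[(fun ω' => (g (Z i ω') ((i : ℝ) / n))^2) | G (i-1)]) ω) ∂μ :=
          integral_add ((integrable_const 1).add I1) I2
        have e2 : ∫ ω, (1 + Real.exp CC * Real.exp (l * ∑ i ∈ Finset.Icc 1 n, (g (Z i ω) ((i : ℝ) / n)
          - (μ[(fun ω' => g (Z i ω') ((i : ℝ) / n)) | G (i-1)]) ω)
          - c' * ∑ i ∈ Finset.Icc 1 n,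
            (μ[(fun ω' => (g (Z i ω') ((i : ℝ) / n))^2) | G (i-1)]) ω)) ∂μ
            = (∫ ω, (1:ℝ) ∂μ) + ∫ ω, Real.exp CC * Real.exp (l * ∑ i ∈ Finset.Icc 1 n, (g (Z i ω) ((i : ℝ) / n)
          - (μ[(fun ω' => g (Z i ω') ((i : ℝ) / n)) | G (i-1)]) ω)
          - c' * ∑ i ∈ Finset.Icc 1 n,
            (μ[(fun ω' => (g (Z i ω') ((i : ℝ) / n))^2) | G (i-1)]) ω) ∂μ :=
          integral_add (integrable_const 1) I1
        rw [e1, e2, integral_const_mul, integral_const_mul]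
        simp only [integral_const, probReal_univ, smul_eq_mul, one_mul]
        have b1 := mul_le_mul_of_nonneg_left E1 (Real.exp_pos CC).le
        have b2 := mul_le_mul_of_nonneg_left E2 (Real.exp_pos CC).le
        linarith
    _ = 1 + 2 * Real.exp CC := by ring


end PerG

end Helpers

/-- **Lemma A.4 (Maximal inequality for martingale empirical processes via
Freedman/Pinelis).** -/
theorem maximal_inequality_martingale :
    ∃ c : ℝ, 0 < c ∧
      ∀ (Ω : Type) (_ : MeasurableSpace Ω) (μ : Measure Ω), IsProbabilityMeasure μ →
      ∀ (d n : ℕ), 0 < n →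
      -- a filtration `(G_i)` …
      ∀ (G : ℕ → MeasurableSpace Ω), (∀ i, G i ≤ ‹MeasurableSpace Ω›) → Monotone G →
      -- … to which the `Z_i` are adapted
      ∀ (Z : ℕ → Ω → (ℕ → Fin d → ℝ)), (∀ i, Measurable[G i] (Z i)) →
      -- a finite class `F` of measurable functions with `sup_{f∈F} ‖f‖_∞ ≤ M`
      ∀ (ι : Type) (_ : Fintype ι) (_ : Nonempty ι)
        (f : ι → (ℕ → Fin d → ℝ) → ℝ → ℝ),
        (∀ j, Measurable (Function.uncurry (f j))) →
      ∀ (M : ℝ), (∀ j z u, |f j z u| ≤ M) →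
      ∀ (R : ℝ), 0 < R →
        ∫ ω, (⨆ j : ι,
            Set.indicator {ω' | Rn2f μ n G Z (f j) ω' ≤ R^2}
              (fun ω' => |Gn1f μ n G Z (f j) ω'|) ω) ∂μ ≤
          c * (R * Real.sqrt (max 1 (Real.log (Fintype.card ι)))
            + M * max 1 (Real.log (Fintype.card ι)) / Real.sqrt n) := by
  refine ⟨6, by norm_num, ?_⟩
  intro Ω m0 μ hprob d n hn G hGle hGm Z hZ ι hfin hne f hfmeas M hMb R hR
  set K : ℕ := Fintype.card ι with hK_def
  have hK1 : 1 ≤ K := Fintype.card_pos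
  set H : ℝ := max 1 (Real.log K) with hH_def
  have hH1 : (1:ℝ) ≤ H := le_max_left _ _
  have hH0 : (0:ℝ) ≤ H := by linarith
  have hsqH1 : (1:ℝ) ≤ Real.sqrt H := by
    rw [show (1:ℝ) = Real.sqrt 1 by simp]
    exact Real.sqrt_le_sqrt hH1
  have hsqH0 : (0:ℝ) < Real.sqrt H := by linarith
  have hn0 : (0:ℝ) < (n:ℝ) := Nat.cast_pos.2 hn
  have hsqn : (0:ℝ) < Real.sqrt n := Real.sqrt_pos.2 hn0
  have hM0 : 0 ≤ M := le_trans (abs_nonneg _) (hMb (Classical.arbitrary ι) (fun _ _ => 0) 0)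
  rcases eq_or_lt_of_le hM0 with hMeq | hMpos
  · -- degenerate case M = 0
    have hf0 : ∀ j z u, f j z u = 0 := fun j z u =>
      abs_nonpos_iff.1 (le_trans (hMb j z u) hMeq.symm.le)
    have hG0 : ∀ j, Gn1f μ n G Z (f j) = fun _ => 0 := by
      intro j
      funext ω
      have hce : ∀ m' : MeasurableSpace Ω, μ[(fun _ : Ω => (0:ℝ)) | m'] = 0 :=
        fun m' => condExp_zero
      simp [Gn1f, hf0, hce]
    have hLHS : (∫ ω, (⨆ j : ι,
        Set.indicator {ω' | Rn2f μ n G Z (f j) ω' ≤ R^2}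
          (fun ω' => |Gn1f μ n G Z (f j) ω'|) ω) ∂μ) = 0 := by
      have : ∀ ω, (⨆ j : ι, Set.indicator {ω' | Rn2f μ n G Z (f j) ω' ≤ R^2}
          (fun ω' => |Gn1f μ n G Z (f j) ω'|) ω) = 0 := by
        intro ω
        have : ∀ j : ι, Set.indicator {ω' | Rn2f μ n G Z (f j) ω' ≤ R^2}
            (fun ω' => |Gn1f μ n G Z (f j) ω'|) ω = 0 := by
          intro j
          rw [hG0 j]
          simp
        simp only [this, ciSup_const]
      simp only [this, integral_zero]
    rw [hLHS, ← hMeq, zero_mul, zero_div, add_zero]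
    have hgoal : 0 < R * Real.sqrt (max 1 (Real.log (Fintype.card ι))) :=
      mul_pos hR (Real.sqrt_pos.2 (lt_of_lt_of_le one_pos (le_max_left _ _)))
    linarith
  -- main case M > 0
  set l0 : ℝ := min (Real.sqrt H / R) (Real.sqrt n / (2*M)) with hl0_def
  have hl0pos : 0 < l0 := lt_min (div_pos hsqH0 hR) (div_pos hsqn (by linarith))
  set l : ℝ := l0 / Real.sqrt n with hl_def
  set CC : ℝ := (l^2/2 * Real.exp (2*M*l)) * (n * R^2) with hCC_def
  have hCC0 : 0 ≤ CC := by positivity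
  -- per-j quantities
  set X : ι → Ω → ℝ := fun j => Set.indicator {ω' | Rn2f μ n G Z (f j) ω' ≤ R^2}
      (fun ω' => |Gn1f μ n G Z (f j) ω'|) with hX_def
  have hX_nonneg : ∀ j ω, 0 ≤ X j ω := fun j ω =>
    Set.indicator_nonneg (fun ω' _ => abs_nonneg _) ω
  have hX_meas : ∀ j, Measurable (X j) := by
    intro j
    exact Measurable.indicator (gn1f_meas μ n G Z (f j) hGle hZ (hfmeas j)).abs
      (measurableSet_le (rn2f_meas μ n G Z (f j) hGle) measurable_const)
  set B0 : ℝ := (Real.sqrt n)⁻¹ * (n * (2*M)) with hB0_def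
  have hB00 : 0 ≤ B0 := by positivity
  have hX_bdd : ∀ᵐ ω ∂μ, ∀ j, X j ω ≤ B0 := by
    rw [MeasureTheory.ae_all_iff]
    intro j
    filter_upwards [gn1f_bdd μ n G Z (f j) hGle (hMb j)] with ω hω
    have hXeq : X j ω = Set.indicator {ω' | Rn2f μ n G Z (f j) ω' ≤ R^2}
        (fun ω' => |Gn1f μ n G Z (f j) ω'|) ω := rfl
    rw [hXeq]
    by_cases hmem : ω ∈ {ω' | Rn2f μ n G Z (f j) ω' ≤ R^2}
    · rw [Set.indicator_of_mem hmem]; exact hω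
    · rw [Set.indicator_of_notMem hmem]; exact hB00
  have hexpX_int : ∀ j, Integrable (fun ω => Real.exp (l0 * X j ω)) μ := by
    intro j
    apply integrable_of_ae_bound ((measurable_const.mul (hX_meas j)).exp).aestronglyMeasurable
      (C := Real.exp (l0 * B0))
    filter_upwards [hX_bdd] with ω hω
    rw [abs_of_pos (Real.exp_pos _), Real.exp_le_exp]
    exact mul_le_mul_of_nonneg_left (hω j) hl0pos.le
  set Y : Ω → ℝ := fun ω => ∑ j : ι, Real.exp (l0 * X j ω) with hY_def
  have hY_meas : Measurable Y := by
    apply Finset.measurable_sum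
    intro j _
    exact (measurable_const.mul (hX_meas j)).exp
  have hY_int : Integrable Y μ := integrable_finset_sum _ (fun j _ => hexpX_int j)
  have hY_ge : ∀ ω, (K:ℝ) ≤ Y ω := by
    intro ω
    calc (K:ℝ) = ∑ _j : ι, (1:ℝ) := by
          rw [Finset.sum_const, Finset.card_univ, nsmul_eq_mul, mul_one, hK_def]
      _ ≤ Y ω := Finset.sum_le_sum fun j _ =>
          Real.one_le_exp (mul_nonneg hl0pos.le (hX_nonneg j ω))
  have hY1 : ∀ ω, (1:ℝ) ≤ Y ω := fun ω => le_trans (by exact_mod_cast hK1) (hY_ge ω)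
  have hY_pos : ∀ ω, (0:ℝ) < Y ω := fun ω => lt_of_lt_of_le one_pos (hY1 ω)
  -- T' = ∫ Y
  set T' : ℝ := ∫ ω, Y ω ∂μ with hT'_def
  have hT'_le : T' ≤ K * (1 + 2 * Real.exp CC) := by
    rw [hT'_def, hY_def]
    rw [integral_finset_sum _ (fun j _ => hexpX_int j)]
    calc ∑ j : ι, ∫ ω, Real.exp (l0 * X j ω) ∂μ
        ≤ ∑ _j : ι, (1 + 2 * Real.exp CC) := by
          apply Finset.sum_le_sum
          intro j _
          exact per_g_bound μ n hn G hGle hGm Z hZ (f j) (hfmeas j) M hM0 (hMb j) R hR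
            l0 hl0pos.le
      _ = K * (1 + 2 * Real.exp CC) := by
          rw [Finset.sum_const, Finset.card_univ, nsmul_eq_mul, hK_def]
  have hT'_ge1 : (1:ℝ) ≤ T' := by
    have h1 : ∫ ω, (1:ℝ) ∂μ ≤ ∫ ω, Y ω ∂μ :=
      integral_mono (integrable_const 1) hY_int hY1
    simpa using h1
  have hT'pos : (0:ℝ) < T' := lt_of_lt_of_le one_pos hT'_ge1
  -- integrability of log Y
  have hlogY_int : Integrable (fun ω => Real.log (Y ω)) μ := by
    apply integrable_of_ae_bound (hY_meas.log).aestronglyMeasurable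
      (C := Real.log ((K:ℝ) * Real.exp (l0 * B0)))
    filter_upwards [hX_bdd] with ω hω
    have hYb : Y ω ≤ (K:ℝ) * Real.exp (l0 * B0) := by
      rw [hY_def]
      calc ∑ j : ι, Real.exp (l0 * X j ω) ≤ ∑ _j : ι, Real.exp (l0 * B0) := by
            apply Finset.sum_le_sum
            intro j _
            exact Real.exp_le_exp.2 (mul_le_mul_of_nonneg_left (hω j) hl0pos.le)
        _ = (K:ℝ) * Real.exp (l0 * B0) := by
            rw [Finset.sum_const, Finset.card_univ, nsmul_eq_mul, hK_def]
    rw [abs_of_nonneg (Real.log_nonneg (hY1 ω))]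
    exact Real.log_le_log (hY_pos ω) hYb
  -- Jensen-type step : ∫ log Y ≤ log T'
  have hlog_le : ∫ ω, Real.log (Y ω) ∂μ ≤ Real.log T' := by
    have hpt : ∀ ω, Real.log (Y ω) ≤ Real.log T' + (Y ω - T') / T' := by
      intro ω
      have h := Real.log_le_sub_one_of_pos (div_pos (hY_pos ω) hT'pos)
      rw [Real.log_div (ne_of_gt (hY_pos ω)) (ne_of_gt hT'pos)] at h
      have h2 : (Y ω - T') / T' = Y ω / T' - 1 := by
        rw [sub_div, div_self (ne_of_gt hT'pos)]
      linarith
    have hrhs_int : Integrable (fun ω => Real.log T' + (Y ω - T') / T') μ :=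
      (integrable_const _).add ((hY_int.sub (integrable_const _)).div_const _)
    have h3 : ∫ ω, Real.log (Y ω) ∂μ ≤ ∫ ω, (Real.log T' + (Y ω - T') / T') ∂μ :=
      integral_mono hlogY_int hrhs_int hpt
    have h4 : ∫ ω, (Real.log T' + (Y ω - T') / T') ∂μ = Real.log T' := by
      have e1 : ∫ ω, (Real.log T' + (Y ω - T') / T') ∂μ
          = (∫ ω, (Real.log T' : ℝ) ∂μ) + ∫ ω, (Y ω - T') / T' ∂μ :=
        integral_add (integrable_const _) ((hY_int.sub (integrable_const _)).div_const _)
      have e2 : ∫ ω, (Y ω - T') / T' ∂μ = (∫ ω, (Y ω - T') ∂μ) / T' := integral_div _ _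
      have e3 : ∫ ω, (Y ω - T') ∂μ = 0 := by
        rw [integral_sub hY_int (integrable_const _), integral_const]
        simp only [probReal_univ, smul_eq_mul, one_mul]
        rw [← hT'_def, sub_self]
      rw [e1, e2, e3]
      simp
    linarith
  -- pointwise sup bound
  have hsup : ∀ ω, (⨆ j : ι, X j ω) ≤ l0⁻¹ * Real.log (Y ω) := by
    intro ω
    refine ciSup_le fun j => ?_
    have h1 : Real.exp (l0 * X j ω) ≤ Y ω :=
      Finset.single_le_sum (f := fun j' => Real.exp (l0 * X j' ω))
        (fun j' _ => (Real.exp_pos _).le) (Finset.mem_univ j)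
    have h2 : l0 * X j ω ≤ Real.log (Y ω) := by
      have h3 := Real.log_le_log (Real.exp_pos _) h1
      rwa [Real.log_exp] at h3
    calc X j ω = l0⁻¹ * (l0 * X j ω) := by field_simp
      _ ≤ l0⁻¹ * Real.log (Y ω) := mul_le_mul_of_nonneg_left h2 (inv_nonneg.2 hl0pos.le)
  -- chain
  have main1 : (∫ ω, (⨆ j : ι, X j ω) ∂μ) ≤ l0⁻¹ * Real.log T' := by
    calc ∫ ω, (⨆ j : ι, X j ω) ∂μ ≤ ∫ ω, l0⁻¹ * Real.log (Y ω) ∂μ := by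
          apply integral_mono_of_nonneg
            (Filter.Eventually.of_forall fun ω => Real.iSup_nonneg fun j => hX_nonneg j ω)
            (hlogY_int.const_mul _)
            (Filter.Eventually.of_forall hsup)
      _ = l0⁻¹ * ∫ ω, Real.log (Y ω) ∂μ := integral_const_mul _ _
      _ ≤ l0⁻¹ * Real.log T' :=
          mul_le_mul_of_nonneg_left hlog_le (inv_nonneg.2 hl0pos.le)
  -- bound log T'
  have hKRge1 : (1:ℝ) ≤ (K:ℝ) := by exact_mod_cast hK1
  have hKRpos : (0:ℝ) < (K:ℝ) := by linarith
  have hlogT' : Real.log T' ≤ Real.log 3 + Real.log K + CC := by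
    have h2 : (1:ℝ) + 2 * Real.exp CC ≤ 3 * Real.exp CC := by
      have := Real.one_le_exp hCC0
      linarith
    have h1 : T' ≤ 3 * K * Real.exp CC := by
      calc T' ≤ K * (1 + 2 * Real.exp CC) := hT'_le
        _ ≤ K * (3 * Real.exp CC) := mul_le_mul_of_nonneg_left h2 hKRpos.le
        _ = 3 * K * Real.exp CC := by ring
    calc Real.log T' ≤ Real.log (3 * K * Real.exp CC) := Real.log_le_log hT'pos h1
      _ = Real.log 3 + Real.log K + CC := by
          rw [Real.log_mul (by positivity) (Real.exp_pos _).ne',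
            Real.log_mul (by norm_num) hKRpos.ne', Real.log_exp]
  -- final arithmetic
  have hlog3 : Real.log 3 ≤ 2 := by
    have := Real.log_le_sub_one_of_pos (show (0:ℝ) < 3 by norm_num)
    linarith
  have hlogK : Real.log K ≤ H := le_max_right _ _
  have hlogK0 : (0:ℝ) ≤ Real.log K := Real.log_nonneg hKRge1
  have h2Ml : 2*M*l ≤ 1 := by
    have h1 : l0 * (2*M) ≤ Real.sqrt n := by
      have h := min_le_right (Real.sqrt H / R) (Real.sqrt n / (2*M))
      rw [← hl0_def] at h
      rw [le_div_iff₀ (by linarith : (0:ℝ) < 2*M)] at h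
      exact h
    rw [hl_def]
    have heq : 2*M*(l0/Real.sqrt n) = (l0*(2*M))/Real.sqrt n := by ring
    rw [heq, div_le_one hsqn]
    exact h1
  have hls : l^2 = l0^2 / n := by
    rw [hl_def, div_pow, Real.sq_sqrt hn0.le]
  have hCCle : CC ≤ (Real.exp 1 / 2) * (l0 * (R * Real.sqrt H)) := by
    have hexp : Real.exp (2*M*l) ≤ Real.exp 1 := Real.exp_le_exp.2 h2Ml
    have hstep1 : CC ≤ (l0^2/n)/2 * Real.exp 1 * (n * R^2) := by
      rw [hCC_def, hls]
      exact mul_le_mul_of_nonneg_right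
        (mul_le_mul_of_nonneg_left hexp (by positivity)) (by positivity)
    have hsimp : (l0^2/n)/2 * Real.exp 1 * (n * R^2)
        = (Real.exp 1 / 2) * (l0 * (l0 * R^2)) := by
      field_simp
    have hl0R : l0 * R^2 ≤ R * Real.sqrt H := by
      have h1 : l0 ≤ Real.sqrt H / R := by rw [hl0_def]; exact min_le_left _ _
      calc l0 * R^2 ≤ (Real.sqrt H / R) * R^2 :=
            mul_le_mul_of_nonneg_right h1 (by positivity)
        _ = R * Real.sqrt H := by field_simp
    calc CC ≤ (Real.exp 1 / 2) * (l0 * (l0 * R^2)) := by rw [← hsimp]; exact hstep1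
      _ ≤ (Real.exp 1 / 2) * (l0 * (R * Real.sqrt H)) := by
          apply mul_le_mul_of_nonneg_left _ (by positivity)
          exact mul_le_mul_of_nonneg_left hl0R hl0pos.le
  have hl0inv : l0⁻¹ ≤ R / Real.sqrt H + 2*M / Real.sqrt n := by
    rcases min_cases (Real.sqrt H / R) (Real.sqrt n / (2*M)) with ⟨heq, _⟩ | ⟨heq, _⟩
    · rw [hl0_def, heq, inv_div]
      have : (0:ℝ) ≤ 2*M/Real.sqrt n := by positivity
      linarith
    · rw [hl0_def, heq, inv_div]
      have : (0:ℝ) ≤ R/Real.sqrt H := by positivity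
      linarith
  have hfinal : l0⁻¹ * Real.log T' ≤ 6 * (R * Real.sqrt H + M * H / Real.sqrt n) := by
    have step1 : l0⁻¹ * Real.log T' ≤ l0⁻¹ * (Real.log 3 + Real.log K + CC) :=
      mul_le_mul_of_nonneg_left hlogT' (inv_nonneg.2 hl0pos.le)
    have step2 : l0⁻¹ * (Real.log 3 + Real.log K)
        ≤ (R / Real.sqrt H + 2*M / Real.sqrt n) * (3*H) := by
      apply mul_le_mul hl0inv (by linarith) (by positivity) (by positivity)
    have hdiv : H / Real.sqrt H = Real.sqrt H := Real.div_sqrt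
    have step3 : (R / Real.sqrt H + 2*M / Real.sqrt n) * (3*H)
        = 3*R*Real.sqrt H + 6*M*H/Real.sqrt n := by
      have e : (R / Real.sqrt H + 2*M/Real.sqrt n) * (3*H)
          = 3*R*(H/Real.sqrt H) + 6*M*H/Real.sqrt n := by ring
      rw [e, hdiv]
    have step4 : l0⁻¹ * CC ≤ (Real.exp 1 / 2) * (R * Real.sqrt H) := by
      have h5 : l0⁻¹ * CC ≤ l0⁻¹ * ((Real.exp 1 / 2) * (l0 * (R * Real.sqrt H))) :=
        mul_le_mul_of_nonneg_left hCCle (inv_nonneg.2 hl0pos.le)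
      have h6 : l0⁻¹ * ((Real.exp 1 / 2) * (l0 * (R * Real.sqrt H)))
          = (Real.exp 1 / 2) * (R * Real.sqrt H) := by
        field_simp
      linarith
    have hexp1 : Real.exp 1 ≤ 3 := by
      have := Real.exp_one_lt_d9
      linarith
    have hRH0 : (0:ℝ) ≤ R * Real.sqrt H := by positivity
    have hMH0 : (0:ℝ) ≤ M * H / Real.sqrt n := by positivity
    have hsplit : l0⁻¹ * (Real.log 3 + Real.log K + CC)
        = l0⁻¹ * (Real.log 3 + Real.log K) + l0⁻¹ * CC := by ring
    have hMHs : 6*M*H/Real.sqrt n ≤ 6 * (M * H / Real.sqrt n) := by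
      rw [mul_div_assoc]
      ring_nf
      exact le_rfl
    nlinarith [step1, step2, step3, step4, hsplit]
  have hfin2 := le_trans main1 hfinal
  rw [hH_def, hK_def] at hfin2
  simpa only [hX_def] using hfin2

end
end

section
/- Integral bound for the chaining weight ψ: Define ψ(ε) = √(log(ε^{−1} ∨ 1)) · log log(ε^{−1} ∨ e) for ε > 0. Then there exists a constant c_ψ > 0 such that for every δ ∈ (0, e^{−e}], ∫₀^δ ψ(x) dx ≤ c_ψ · δ · ψ(δ). -/
open Filter Set

/-- The chaining weight `ψ(ε) = √(log(ε⁻¹ ∨ 1)) · log log(ε⁻¹ ∨ e)`. -/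
noncomputable def psiw (ε : ℝ) : ℝ :=
  Real.sqrt (Real.log (max ε⁻¹ 1)) * Real.log (Real.log (max ε⁻¹ (Real.exp 1)))

lemma log_le_two_sqrt {v : ℝ} (hv : 0 < v) : Real.log v ≤ 2 * Real.sqrt v := by
  have h0 : (0:ℝ) < Real.sqrt v := Real.sqrt_pos.2 hv
  have h1 : Real.log (Real.sqrt v) ≤ Real.sqrt v - 1 := Real.log_le_sub_one_of_pos h0
  have h2 : Real.log (Real.sqrt v) = Real.log v / 2 := Real.log_sqrt hv.le
  nlinarith

lemma sqrt_exp' (x : ℝ) : Real.sqrt (Real.exp x) = Real.exp (x/2) := by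
  rw [show Real.exp x = (Real.exp (x/2))^2 by rw [sq, ← Real.exp_add]; ring_nf]
  exact Real.sqrt_sq (Real.exp_pos _).le

lemma psiw_nonneg (ε : ℝ) : 0 ≤ psiw ε := by
  unfold psiw
  apply mul_nonneg (Real.sqrt_nonneg _)
  apply Real.log_nonneg
  calc (1:ℝ) = Real.log (Real.exp 1) := (Real.log_exp 1).symm
    _ ≤ _ := Real.log_le_log (Real.exp_pos 1) (le_max_right _ _)

lemma psiw_eq {x : ℝ} (hx : 0 < x) (hxe : x ≤ Real.exp (-(Real.exp 1))) :
    psiw x = Real.sqrt (Real.log x⁻¹) * Real.log (Real.log x⁻¹) ∧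
      Real.exp 1 ≤ Real.log x⁻¹ := by
  have h1 : Real.exp (Real.exp 1) ≤ x⁻¹ := by
    rw [show Real.exp (Real.exp 1) = (Real.exp (-(Real.exp 1)))⁻¹ by
      rw [← Real.exp_neg]; ring_nf]
    exact inv_anti₀ hx hxe
  have he1 : (1:ℝ) ≤ Real.exp 1 := Real.one_le_exp zero_le_one
  have hee : Real.exp 1 ≤ Real.exp (Real.exp 1) := Real.exp_le_exp.2 he1
  have h2 : Real.exp 1 ≤ Real.log x⁻¹ := by
    calc Real.exp 1 = Real.log (Real.exp (Real.exp 1)) := (Real.log_exp _).symm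
      _ ≤ Real.log x⁻¹ := Real.log_le_log (Real.exp_pos _) h1
  refine ⟨?_, h2⟩
  unfold psiw
  rw [max_eq_left (le_trans (le_trans he1 hee) h1), max_eq_left (le_trans hee h1)]

set_option maxHeartbeats 1000000 in
lemma psiw_key {x δ : ℝ} (hx : 0 < x) (hxδ : x < δ)
    (hδ : δ ≤ Real.exp (-(Real.exp 1))) :
    psiw x ≤ 16 * psiw δ * Real.sqrt δ * x ^ (-(1/2) : ℝ) := by
  have hδ0 : 0 < δ := lt_trans hx hxδ
  obtain ⟨hψδ, hL⟩ := psiw_eq hδ0 hδ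
  obtain ⟨hψx, hK'⟩ := psiw_eq hx (le_of_lt (lt_of_lt_of_le hxδ hδ))
  set L := Real.log δ⁻¹ with hLdef
  set K := Real.log x⁻¹ with hKdef
  clear_value L K
  have he2 : (2:ℝ) ≤ Real.exp 1 := by nlinarith [Real.exp_one_gt_d9]
  have hKL : L ≤ K := by
    rw [hLdef, hKdef]
    exact Real.log_le_log (inv_pos.2 hδ0) (inv_anti₀ hx hxδ.le)
  have hL2 : (2:ℝ) ≤ L := le_trans he2 hL
  have hK2 : (2:ℝ) ≤ K := le_trans hL2 hKL
  have hlogL1 : (1:ℝ) ≤ Real.log L := by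
    calc (1:ℝ) = Real.log (Real.exp 1) := (Real.log_exp 1).symm
      _ ≤ Real.log L := Real.log_le_log (Real.exp_pos 1) hL
  have hlogK1 : (1:ℝ) ≤ Real.log K := by
    calc (1:ℝ) = Real.log (Real.exp 1) := (Real.log_exp 1).symm
      _ ≤ Real.log K := Real.log_le_log (Real.exp_pos 1) (le_trans hL hKL)
  have hsL1 : (1:ℝ) ≤ Real.sqrt L := by
    rw [show (1:ℝ) = Real.sqrt 1 by simp]
    exact Real.sqrt_le_sqrt (by linarith)
  have hxrpow : x ^ (-(1/2) : ℝ) = (Real.sqrt x)⁻¹ := by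
    rw [Real.rpow_neg hx.le, Real.sqrt_eq_rpow]
  have hsx0 : 0 < Real.sqrt x := Real.sqrt_pos.2 hx
  have hratio : (1:ℝ) ≤ Real.sqrt δ * x ^ (-(1/2) : ℝ) := by
    rw [hxrpow, ← div_eq_mul_inv, le_div_iff₀ hsx0, one_mul]
    exact Real.sqrt_le_sqrt hxδ.le
  have hψδ0 : 0 ≤ psiw δ := psiw_nonneg δ
  rw [hψx]
  by_cases h : K ≤ 2 * L
  · -- small ratio case: ψ(x) ≤ 2√2 ψ(δ)
    have hsK : Real.sqrt K ≤ Real.sqrt 2 * Real.sqrt L := by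
      rw [← Real.sqrt_mul (by norm_num)]
      exact Real.sqrt_le_sqrt h
    have hlogK : Real.log K ≤ 2 * Real.log L := by
      have := Real.log_le_log (by linarith : (0:ℝ) < K) h
      rw [Real.log_mul (by norm_num) (by linarith)] at this
      have hlog2 : Real.log 2 ≤ 1 := by
        calc Real.log 2 ≤ Real.log (Real.exp 1) :=
          Real.log_le_log (by norm_num) (by nlinarith [Real.exp_one_gt_d9])
        _ = 1 := Real.log_exp 1
      linarith
    have hs2 : Real.sqrt 2 ≤ 2 := by
      nlinarith [Real.sq_sqrt (by norm_num : (0:ℝ) ≤ 2), Real.sqrt_nonneg 2]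
    have key : Real.sqrt K * Real.log K ≤ 8 * (Real.sqrt L * Real.log L) := by
      have h1 : Real.sqrt K * Real.log K ≤ (Real.sqrt 2 * Real.sqrt L) * (2 * Real.log L) := by
        apply mul_le_mul hsK hlogK (by linarith) (by positivity)
      nlinarith [Real.sqrt_nonneg L, Real.sqrt_nonneg (2:ℝ)]
    have hRn : (0:ℝ) ≤ Real.sqrt δ * x ^ (-(1/2) : ℝ) := le_trans zero_le_one hratio
    calc Real.sqrt K * Real.log K ≤ 8 * (Real.sqrt L * Real.log L) := key
      _ = 8 * psiw δ := by rw [hψδ]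
      _ = 8 * psiw δ * 1 := by ring
      _ ≤ 8 * psiw δ * (Real.sqrt δ * x ^ (-(1/2) : ℝ)) :=
          mul_le_mul_of_nonneg_left hratio (by linarith)
      _ ≤ 16 * psiw δ * (Real.sqrt δ * x ^ (-(1/2) : ℝ)) :=
          mul_le_mul_of_nonneg_right (by linarith) hRn
      _ = 16 * psiw δ * Real.sqrt δ * x ^ (-(1/2) : ℝ) := by ring
  · -- large ratio case
    push_neg at h
    set M := K - L with hMdef
    clear_value M
    have hM2 : (2:ℝ) ≤ M := by simp only [hMdef]; linarith
    have hM0 : (0:ℝ) < M := by linarith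
    have hlogM1 : (1:ℝ) ≤ Real.log M := by
      calc (1:ℝ) = Real.log (Real.exp 1) := (Real.log_exp 1).symm
        _ ≤ Real.log M := Real.log_le_log (Real.exp_pos 1) (by simp only [hMdef]; linarith)
    have hsM1 : (1:ℝ) ≤ Real.sqrt M := by
      rw [show (1:ℝ) = Real.sqrt 1 by simp]
      exact Real.sqrt_le_sqrt (by linarith)
    have hKLM : K = L + M := by simp [hMdef]
    -- √K ≤ 2 √L √M
    have hsK : Real.sqrt K ≤ 2 * Real.sqrt L * Real.sqrt M := by
      have h1 : Real.sqrt K ≤ Real.sqrt L + Real.sqrt M := by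
        rw [hKLM]
        have := Real.sq_sqrt (by linarith : (0:ℝ) ≤ L)
        have := Real.sq_sqrt (by linarith : (0:ℝ) ≤ M)
        have h2 : L + M ≤ (Real.sqrt L + Real.sqrt M)^2 := by
          nlinarith [Real.sqrt_nonneg L, Real.sqrt_nonneg M]
        calc Real.sqrt (L + M) ≤ Real.sqrt ((Real.sqrt L + Real.sqrt M)^2) :=
            Real.sqrt_le_sqrt h2
          _ = Real.sqrt L + Real.sqrt M := Real.sqrt_sq (by positivity)
      have a1 : Real.sqrt L ≤ Real.sqrt L * Real.sqrt M :=
        le_mul_of_one_le_right (by positivity) hsM1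
      have a2 : Real.sqrt M ≤ Real.sqrt L * Real.sqrt M :=
        le_mul_of_one_le_left (by positivity) hsL1
      linarith
    -- log K ≤ 2 log L log M
    have hlogK : Real.log K ≤ 2 * Real.log L * Real.log M := by
      have hLM : K ≤ L * M := by nlinarith [hKLM, hL2, hM2]
      have h1 : Real.log K ≤ Real.log L + Real.log M := by
        calc Real.log K ≤ Real.log (L * M) := Real.log_le_log (by linarith) hLM
          _ = Real.log L + Real.log M := Real.log_mul (by linarith) (by linarith)
      have b1 : Real.log L ≤ Real.log L * Real.log M :=
        le_mul_of_one_le_right (by linarith) hlogM1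
      have b2 : Real.log M ≤ Real.log L * Real.log M :=
        le_mul_of_one_le_left (by linarith) hlogL1
      linarith
    -- √M log M ≤ 2 M ≤ 4 exp(M/2) = 4 √δ x^{-1/2}
    have hexpM : Real.exp M = δ / x := by
      simp only [hMdef, hKdef, hLdef]
      rw [Real.exp_sub, Real.exp_log (inv_pos.2 hx), Real.exp_log (inv_pos.2 hδ0)]
      field_simp
    have hMexp : M ≤ 2 * Real.exp (M / 2) := by
      have := log_le_two_sqrt (Real.exp_pos M)
      rwa [Real.log_exp, sqrt_exp'] at this
    have hexphalf : Real.exp (M / 2) = Real.sqrt δ * x ^ (-(1/2) : ℝ) := by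
      rw [← sqrt_exp', hexpM, hxrpow, Real.sqrt_div hδ0.le, div_eq_mul_inv]
    have hsqM : Real.sqrt M * Real.sqrt M = M := Real.mul_self_sqrt hM0.le
    have hψMbound : Real.sqrt M * Real.log M ≤ 4 * (Real.sqrt δ * x ^ (-(1/2) : ℝ)) := by
      have h1 : Real.sqrt M * Real.log M ≤ Real.sqrt M * (2 * Real.sqrt M) :=
        mul_le_mul_of_nonneg_left (log_le_two_sqrt hM0) (Real.sqrt_nonneg M)
      have h2 : Real.sqrt M * (2 * Real.sqrt M) = 2 * M := by linear_combination 2 * hsqM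
      rw [← hexphalf]
      nlinarith
    calc Real.sqrt K * Real.log K
        ≤ (2 * Real.sqrt L * Real.sqrt M) * (2 * Real.log L * Real.log M) :=
          mul_le_mul hsK hlogK (by linarith) (by positivity)
      _ = 4 * (Real.sqrt L * Real.log L) * (Real.sqrt M * Real.log M) := by ring
      _ = 4 * psiw δ * (Real.sqrt M * Real.log M) := by rw [← hψδ]
      _ ≤ 4 * psiw δ * (4 * (Real.sqrt δ * x ^ (-(1/2) : ℝ))) := by
          apply mul_le_mul_of_nonneg_left hψMbound (by linarith)
      _ = 16 * psiw δ * Real.sqrt δ * x ^ (-(1/2) : ℝ) := by ring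

/-- **Integral bound for the chaining weight `ψ`.** -/
theorem psiw_integral_bound :
    ∃ cψ : ℝ, 0 < cψ ∧
      ∀ δ : ℝ, δ ∈ Set.Ioc (0 : ℝ) (Real.exp (-(Real.exp 1))) →
        ∫ x in Set.Ioo (0 : ℝ) δ, psiw x ≤ cψ * δ * psiw δ := by
  refine ⟨32, by norm_num, ?_⟩
  rintro δ ⟨hδ0, hδe⟩
  have hψδ0 : 0 ≤ psiw δ := psiw_nonneg δ
  have hInt : MeasureTheory.IntegrableOn (fun x : ℝ => x ^ (-(1/2) : ℝ))
      (Set.Ioo (0:ℝ) δ) := by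
    have h := intervalIntegral.intervalIntegrable_rpow' (a := 0) (b := δ)
      (r := -(1/2)) (by norm_num)
    rw [intervalIntegrable_iff_integrableOn_Ioc_of_le hδ0.le] at h
    exact h.mono_set Set.Ioo_subset_Ioc_self
  have hgInt : MeasureTheory.IntegrableOn
      (fun x : ℝ => 16 * psiw δ * Real.sqrt δ * x ^ (-(1/2) : ℝ))
      (Set.Ioo (0:ℝ) δ) := hInt.const_mul _
  have hmono : ∫ x in Set.Ioo (0:ℝ) δ, psiw x
      ≤ ∫ x in Set.Ioo (0:ℝ) δ, 16 * psiw δ * Real.sqrt δ * x ^ (-(1/2) : ℝ) := by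
    apply MeasureTheory.integral_mono_of_nonneg
    · exact Filter.Eventually.of_forall psiw_nonneg
    · exact hgInt
    · refine (MeasureTheory.ae_restrict_iff' measurableSet_Ioo).2
        (Filter.Eventually.of_forall fun x hx => ?_)
      exact psiw_key hx.1 hx.2 hδe
  have hcalc : ∫ x in Set.Ioo (0:ℝ) δ, x ^ (-(1/2) : ℝ) = 2 * Real.sqrt δ := by
    have h1 : ∫ x in (0:ℝ)..δ, x ^ (-(1/2):ℝ) = 2 * Real.sqrt δ := by
      rw [integral_rpow (Or.inl (by norm_num))]
      rw [Real.sqrt_eq_rpow]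
      norm_num
      ring
    rw [← MeasureTheory.integral_Ioc_eq_integral_Ioo,
      ← intervalIntegral.integral_of_le hδ0.le, h1]
  calc ∫ x in Set.Ioo (0:ℝ) δ, psiw x
      ≤ ∫ x in Set.Ioo (0:ℝ) δ, 16 * psiw δ * Real.sqrt δ * x ^ (-(1/2) : ℝ) := hmono
    _ = 16 * psiw δ * Real.sqrt δ * ∫ x in Set.Ioo (0:ℝ) δ, x ^ (-(1/2) : ℝ) :=
        MeasureTheory.integral_const_mul _ _
    _ = 16 * psiw δ * Real.sqrt δ * (2 * Real.sqrt δ) := by rw [hcalc]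
    _ = 32 * (Real.sqrt δ * Real.sqrt δ) * psiw δ := by ring
    _ = 32 * δ * psiw δ := by rw [Real.mul_self_sqrt hδ0.le]
end

section
/- From the V-functional to the L²-norm: Let Δ : ℕ → [0,∞) be nonincreasing with Σ_{j=1}^∞ Δ(j) < ∞. Define β(q) = Σ_{j=q}^∞ Δ(j), q*(x) = min{q ∈ ℕ, q ≥ 1 : β(q) ≤ q x} for x > 0, and r(δ) = sup{ r > 0 : q*(r) r ≤ δ } for δ > 0. Let D > 0, δ > 0 and x ≥ 0. If x + Σ_{j=1}^∞ min{x, D Δ(j)} ≤ δ, then x ≤ D · r(δ/D). -/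
open Filter Set

/-- `β(q) = Σ_{j=q}^∞ Δ(j)`. -/
noncomputable def beta (Δ : ℕ → ℝ) (q : ℕ) : ℝ := ∑' j : ℕ, Δ (q + j)

/-- `q*(x) = min{q ∈ ℕ, q ≥ 1 : β(q) ≤ q x}`. -/
noncomputable def qstar (Δ : ℕ → ℝ) (x : ℝ) : ℕ := sInf {q : ℕ | 1 ≤ q ∧ beta Δ q ≤ q * x}

/-- `r(δ) = sup{r > 0 : q*(r)·r ≤ δ}`. -/
noncomputable def rr (Δ : ℕ → ℝ) (δ : ℝ) : ℝ :=
  sSup {r : ℝ | 0 < r ∧ (qstar Δ r : ℝ) * r ≤ δ}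

lemma summable_tail (Δ : ℕ → ℝ) (hsum : Summable (fun j : ℕ => Δ (1 + j)))
    {q : ℕ} (hq : 1 ≤ q) : Summable (fun j : ℕ => Δ (q + j)) := by
  have h := (summable_nat_add_iff (q - 1)).2 hsum
  exact h.congr (fun j => by congr 1; omega)

lemma beta_nonneg (Δ : ℕ → ℝ) (hΔ0 : ∀ j, 0 ≤ Δ j) (q : ℕ) : 0 ≤ beta Δ q :=
  tsum_nonneg (fun j => hΔ0 _)

lemma beta_anti (Δ : ℕ → ℝ) (hΔ0 : ∀ j, 0 ≤ Δ j)
    (hsum : Summable (fun j : ℕ => Δ (1 + j)))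
    {p q : ℕ} (hp : 1 ≤ p) (hpq : p ≤ q) : beta Δ q ≤ beta Δ p := by
  have hs := summable_tail Δ hsum hp
  have heq := Summable.sum_add_tsum_nat_add (q - p) hs
  have htail : ∑' i : ℕ, Δ (p + (i + (q - p))) = beta Δ q := by
    unfold beta
    exact tsum_congr (fun i => by congr 1; omega)
  rw [htail] at heq
  have h2 : ∑' (i : ℕ), Δ (p + i) = beta Δ p := rfl
  have h3 : 0 ≤ ∑ i ∈ Finset.range (q - p), Δ (p + i) :=
    Finset.sum_nonneg (fun i _ => hΔ0 _)
  linarith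

lemma qstar_mem (Δ : ℕ → ℝ) (hΔ0 : ∀ j, 0 ≤ Δ j)
    (hsum : Summable (fun j : ℕ => Δ (1 + j))) {r : ℝ} (hr : 0 < r) :
    1 ≤ qstar Δ r ∧ beta Δ (qstar Δ r) ≤ (qstar Δ r : ℝ) * r := by
  have hne : {q : ℕ | 1 ≤ q ∧ beta Δ q ≤ q * r}.Nonempty := by
    refine ⟨max 1 ⌈beta Δ 1 / r⌉₊, le_max_left _ _, ?_⟩
    have h1 : beta Δ (max 1 ⌈beta Δ 1 / r⌉₊) ≤ beta Δ 1 :=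
      beta_anti Δ hΔ0 hsum le_rfl (le_max_left _ _)
    have h2 : beta Δ 1 ≤ (⌈beta Δ 1 / r⌉₊ : ℝ) * r := by
      rw [← div_le_iff₀ hr]
      exact Nat.le_ceil _
    have h3 : ((⌈beta Δ 1 / r⌉₊ : ℕ) : ℝ) ≤ ((max 1 ⌈beta Δ 1 / r⌉₊ : ℕ) : ℝ) := by
      exact_mod_cast le_max_right _ _
    calc beta Δ (max 1 ⌈beta Δ 1 / r⌉₊) ≤ beta Δ 1 := h1
      _ ≤ (⌈beta Δ 1 / r⌉₊ : ℝ) * r := h2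
      _ ≤ ((max 1 ⌈beta Δ 1 / r⌉₊ : ℕ) : ℝ) * r := by
          exact mul_le_mul_of_nonneg_right h3 hr.le
  exact Nat.sInf_mem hne

/-- **From the `V`-functional to the `L²`-norm.** -/
theorem V_functional_to_L2 (Δ : ℕ → ℝ) (hΔ0 : ∀ j, 0 ≤ Δ j) (hΔmono : Antitone Δ)
    -- `Σ_{j=1}^∞ Δ(j) < ∞`
    (hsum : Summable (fun j : ℕ => Δ (1 + j)))
    (D δ x : ℝ) (hD : 0 < D) (hδ : 0 < δ) (hx : 0 ≤ x)
    (h : x + ∑' j : ℕ, min x (D * Δ (1 + j)) ≤ δ) :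
    x ≤ D * rr Δ (δ / D) := by
  rcases eq_or_lt_of_le hx with hx0 | hx0
  · have hrr : 0 ≤ rr Δ (δ / D) := Real.sSup_nonneg (fun r hr => hr.1.le)
    rw [← hx0]
    exact mul_nonneg hD.le hrr
  -- x > 0 case
  set y := x / D with hy
  have hy0 : 0 < y := div_pos hx0 hD
  set q := qstar Δ y with hqdef
  obtain ⟨hq1, hqβ⟩ := qstar_mem Δ hΔ0 hsum hy0
  -- the minimum function
  set g : ℕ → ℝ := fun j => min x (D * Δ (1 + j)) with hg
  have hg0 : ∀ j, 0 ≤ g j := fun j => le_min hx (mul_nonneg hD.le (hΔ0 _))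
  have hgle : ∀ j, g j ≤ D * Δ (1 + j) := fun j => min_le_right _ _
  have hgsum : Summable g := Summable.of_nonneg_of_le hg0 hgle (hsum.mul_left D)
  set T := ∑' j : ℕ, g j with hT
  have hT0 : 0 ≤ T := tsum_nonneg hg0
  -- key estimate : (q - 1) * x ≤ T
  have key : ((q : ℝ) - 1) * x ≤ T := by
    by_cases hA : ∀ k, 1 ≤ k → k ≤ q - 1 → x ≤ D * Δ k
    · -- all mins in the first block equal x
      have hsumle : ∑ j ∈ Finset.range (q - 1), g j ≤ T :=
        Summable.sum_le_tsum _ (fun j _ => hg0 j) hgsum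
      have heach : ∀ j ∈ Finset.range (q - 1), g j = x := by
        intro j hj
        simp only [Finset.mem_range] at hj
        exact min_eq_left (hA (1 + j) (by omega) (by omega))
      rw [Finset.sum_congr rfl heach, Finset.sum_const, Finset.card_range] at hsumle
      have : ((q - 1 : ℕ) : ℝ) = (q : ℝ) - 1 := by
        push_cast [Nat.cast_sub (show 1 ≤ q from hq1)]; ring
      rw [nsmul_eq_mul, this] at hsumle
      exact hsumle
    · push_neg at hA
      obtain ⟨k, hk1, hkq, hkx⟩ := hA
      have hq2 : 2 ≤ q := by omega
      -- p : the least index with D Δ p < x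
      have hPne : {m : ℕ | 1 ≤ m ∧ D * Δ m < x}.Nonempty := ⟨k, hk1, hkx⟩
      set p := sInf {m : ℕ | 1 ≤ m ∧ D * Δ m < x} with hpdef
      obtain ⟨hp1, hpx⟩ : 1 ≤ p ∧ D * Δ p < x := Nat.sInf_mem hPne
      have hpk : p ≤ k := Nat.sInf_le ⟨hk1, hkx⟩
      have hmin : ∀ m, 1 ≤ m → m < p → x ≤ D * Δ m := by
        intro m hm1 hmp
        by_contra hc
        push_neg at hc
        have hmem : m ∈ {m : ℕ | 1 ≤ m ∧ D * Δ m < x} := ⟨hm1, hc⟩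
        have := Nat.sInf_le hmem
        omega
      -- split the tsum at p - 1
      have hsplit := Summable.sum_add_tsum_nat_add (p - 1) hgsum
      have hhead : ∑ j ∈ Finset.range (p - 1), g j = ((p : ℝ) - 1) * x := by
        have heach : ∀ j ∈ Finset.range (p - 1), g j = x := by
          intro j hj
          simp only [Finset.mem_range] at hj
          exact min_eq_left (hmin (1 + j) (by omega) (by omega))
        rw [Finset.sum_congr rfl heach, Finset.sum_const, Finset.card_range,
          nsmul_eq_mul]
        congr 1
        push_cast [Nat.cast_sub hp1]; ring
      have htail : ∑' j : ℕ, g (j + (p - 1)) = D * beta Δ p := by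
        have heach : ∀ j : ℕ, g (j + (p - 1)) = D * Δ (p + j) := by
          intro j
          have hidx : 1 + (j + (p - 1)) = p + j := by omega
          have hle : D * Δ (p + j) ≤ D * Δ p :=
            mul_le_mul_of_nonneg_left (hΔmono (Nat.le_add_right p j)) hD.le
          simp only [hg, hidx]
          exact min_eq_right (le_of_lt (lt_of_le_of_lt hle hpx))
        rw [tsum_congr heach]
        unfold beta
        exact tsum_mul_left
      rw [hhead, htail] at hsplit
      -- β(q-1) > (q-1) y
      have hq1notin : (q : ℕ) - 1 ∉ {m : ℕ | 1 ≤ m ∧ beta Δ m ≤ m * y} := by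
        intro hmem
        have h2 : qstar Δ y ≤ q - 1 := Nat.sInf_le hmem
        rw [← hqdef] at h2
        omega
      have hβq1 : ((q : ℝ) - 1) * y < beta Δ (q - 1) := by
        by_contra hc
        push_neg at hc
        apply hq1notin
        refine ⟨by omega, ?_⟩
        have : ((q - 1 : ℕ) : ℝ) = (q : ℝ) - 1 := by
          push_cast [Nat.cast_sub (show 1 ≤ q from hq1)]; ring
        rw [this]
        exact hc
      have hpq1 : p ≤ q - 1 := le_trans hpk hkq
      have hβmono : beta Δ (q - 1) ≤ beta Δ p :=
        beta_anti Δ hΔ0 hsum hp1 hpq1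
      have hDy : D * y = x := by
        rw [hy]; field_simp
      have hkey2 : ((q : ℝ) - 1) * x < D * beta Δ p := by
        calc ((q : ℝ) - 1) * x = D * (((q : ℝ) - 1) * y) := by rw [← hDy]; ring
          _ < D * beta Δ (q - 1) := by
              exact mul_lt_mul_of_pos_left hβq1 hD
          _ ≤ D * beta Δ p := mul_le_mul_of_nonneg_left hβmono hD.le
      have hp1x : 0 ≤ ((p : ℝ) - 1) * x := by
        have : (1 : ℝ) ≤ (p : ℝ) := by exact_mod_cast hp1
        nlinarith
      linarith [hsplit.ge, hsplit.le]
  -- conclude : q x ≤ δ, hence y ∈ S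
  have hqx : (q : ℝ) * x ≤ δ := by
    have : (q : ℝ) * x = ((q : ℝ) - 1) * x + x := by ring
    linarith
  have hmemS : y ∈ {r : ℝ | 0 < r ∧ (qstar Δ r : ℝ) * r ≤ δ / D} := by
    refine ⟨hy0, ?_⟩
    rw [← hqdef]
    rw [hy, mul_div_assoc']
    exact (div_le_div_iff_of_pos_right hD).mpr hqx
  have hbdd : BddAbove {r : ℝ | 0 < r ∧ (qstar Δ r : ℝ) * r ≤ δ / D} := by
    refine ⟨δ / D, fun r hr => ?_⟩
    obtain ⟨hr0, hrq⟩ := hr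
    obtain ⟨hq1', _⟩ := qstar_mem Δ hΔ0 hsum hr0
    have : (1 : ℝ) ≤ (qstar Δ r : ℝ) := by exact_mod_cast hq1'
    nlinarith
  have hle : y ≤ rr Δ (δ / D) := le_csSup hbdd hmemS
  calc x = D * y := by rw [hy]; field_simp
    _ ≤ D * rr Δ (δ / D) := mul_le_mul_of_nonneg_left hle hD.le
end

section
/- Hölder smoothness of conditional kernel moments (Example 2): Let κ ∈ {1,2}, h > 0, x ∈ ℝ, C_∞ > 0, L_G > 0 and s ∈ (0, 1/κ]. Let K : ℝ → ℝ be measurable with ∫_ℝ |K(w)|^κ dw < ∞, and let (g_z)_{z∈ℝ} be a family of probability densities on ℝ such that 0 ≤ g_z(y) ≤ C_∞ for all z, y and |g_z(y) − g_{z′}(y)| ≤ L_G |z − z′| for all y, z, z′. Define μ^{(κ)}(z) := h^{1/κ − 1/2} ( ∫_ℝ K(w)^κ g_z(x + w h) dw )^{1/κ} (with the convention that for κ = 2 the inner integral is nonnegative). Then for all z, z′ ∈ ℝ: |μ^{(κ)}(z) − μ^{(κ)}(z′)| ≤ h^{1/κ − 1/2} ( ∫_ℝ |K(w)|^κ dw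 )^{1/κ} · C_∞^{1/κ − s} L_G^s |z − z′|^s. -/
open Filter Set MeasureTheory

section helpers
variable (κ : ℕ) (h : ℝ) (x : ℝ) (Cinf L_G : ℝ) (K : ℝ → ℝ) (g : ℝ → ℝ → ℝ)

lemma integ_aux (hCinf : 0 < Cinf)
    (hKmeas : Measurable K)
    (hKint : Integrable (fun w => |K w| ^ (κ : ℕ)) (volume : Measure ℝ))
    (hg_meas : ∀ z, Measurable (g z))
    (hg_nonneg : ∀ z y, 0 ≤ g z y) (hg_bdd : ∀ z y, g z y ≤ Cinf) (z : ℝ) :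
    Integrable (fun w => K w ^ (κ : ℕ) * g z (x + w * h)) (volume : Measure ℝ) := by
  have hmeas : Measurable (fun w => K w ^ (κ : ℕ) * g z (x + w * h)) :=
    (hKmeas.pow_const κ).mul ((hg_meas z).comp (measurable_const.add (measurable_id.mul_const h)))
  refine (hKint.const_mul Cinf).mono hmeas.aestronglyMeasurable (ae_of_all _ fun w => ?_)
  have h1 : |g z (x + w * h)| ≤ Cinf := abs_le.2 ⟨by linarith [hg_nonneg z (x + w*h)], hg_bdd z _⟩
  have h2 : |K w ^ (κ:ℕ)| = |K w| ^ (κ:ℕ) := abs_pow _ _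
  have h3 : ‖Cinf * |K w| ^ (κ:ℕ)‖ = Cinf * |K w| ^ (κ:ℕ) :=
    abs_of_nonneg (mul_nonneg hCinf.le (pow_nonneg (abs_nonneg _) _))
  rw [Real.norm_eq_abs, h3, abs_mul, h2, mul_comm Cinf]
  exact mul_le_mul_of_nonneg_left h1 (pow_nonneg (abs_nonneg _) _)

lemma key_bound (hCinf : 0 < Cinf) (hLG : 0 < L_G)
    (hKmeas : Measurable K)
    (hKint : Integrable (fun w => |K w| ^ (κ : ℕ)) (volume : Measure ℝ))
    (hg_meas : ∀ z, Measurable (g z))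
    (hg_nonneg : ∀ z y, 0 ≤ g z y) (hg_bdd : ∀ z y, g z y ≤ Cinf)
    (hg_lip : ∀ y z z', |g z y - g z' y| ≤ L_G * |z - z'|) (z z' : ℝ) :
    |(∫ w, K w ^ (κ : ℕ) * g z (x + w * h)) - ∫ w, K w ^ (κ : ℕ) * g z' (x + w * h)|
      ≤ (∫ w, |K w| ^ (κ : ℕ)) * min Cinf (L_G * |z - z'|) := by
  set m := min Cinf (L_G * |z - z'|) with hm
  have hm0 : 0 ≤ m := le_min hCinf.le (by positivity)
  have hf := integ_aux κ h x Cinf K g hCinf hKmeas hKint hg_meas hg_nonneg hg_bdd z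
  have hf' := integ_aux κ h x Cinf K g hCinf hKmeas hKint hg_meas hg_nonneg hg_bdd z'
  rw [← integral_sub hf hf']
  calc |∫ w, (K w ^ (κ:ℕ) * g z (x + w * h) - K w ^ (κ:ℕ) * g z' (x + w * h))|
      ≤ ∫ w, |K w ^ (κ:ℕ) * g z (x + w * h) - K w ^ (κ:ℕ) * g z' (x + w * h)| := by
        simpa [Real.norm_eq_abs] using
          norm_integral_le_integral_norm (fun w => K w ^ (κ:ℕ) * g z (x + w * h) - K w ^ (κ:ℕ) * g z' (x + w * h))
    _ ≤ ∫ w, |K w| ^ (κ:ℕ) * m := by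
        refine integral_mono ?_ (hKint.mul_const m) (fun w => ?_)
        · simpa [Real.norm_eq_abs] using (hf.sub hf').norm
        · rw [← mul_sub, abs_mul, abs_pow]
          refine mul_le_mul_of_nonneg_left ?_ (by positivity)
          exact le_min
            (abs_sub_le_iff.2 ⟨by linarith [hg_bdd z (x+w*h), hg_nonneg z' (x+w*h)],
              by linarith [hg_bdd z' (x+w*h), hg_nonneg z (x+w*h)]⟩)
            (hg_lip _ _ _)
    _ = (∫ w, |K w| ^ (κ:ℕ)) * m := integral_mul_const m _

end helpers

lemma min_le_interp (a b s : ℝ) (ha : 0 < a) (hb : 0 < b) (hs0 : 0 ≤ s) (hs1 : s ≤ 1) :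
    min a b ≤ a ^ (1 - s) * b ^ s := by
  rcases le_total a b with hab | hab
  · rw [min_eq_left hab]
    calc a = a ^ (1-s) * a ^ s := by rw [← Real.rpow_add ha]; norm_num
      _ ≤ a ^ (1-s) * b ^ s := by
          exact mul_le_mul_of_nonneg_left (Real.rpow_le_rpow ha.le hab hs0) (by positivity)
  · rw [min_eq_right hab]
    calc b = b ^ (1-s) * b ^ s := by rw [← Real.rpow_add hb]; norm_num
      _ ≤ a ^ (1-s) * b ^ s := by
          exact mul_le_mul_of_nonneg_right
            (Real.rpow_le_rpow hb.le hab (by linarith)) (by positivity)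

lemma sqrt_subadd (a b : ℝ) (ha : 0 ≤ a) (hb : 0 ≤ b) :
    Real.sqrt (a + b) ≤ Real.sqrt a + Real.sqrt b := by
  have h1 := Real.sq_sqrt ha
  have h2 := Real.sq_sqrt hb
  have h3 := Real.sqrt_nonneg a
  have h4 := Real.sqrt_nonneg b
  rw [show a + b = (Real.sqrt a)^2 + (Real.sqrt b)^2 by rw [h1, h2]]
  have : (Real.sqrt a)^2 + (Real.sqrt b)^2 ≤ (Real.sqrt a + Real.sqrt b)^2 := by nlinarith
  calc Real.sqrt ((Real.sqrt a)^2 + (Real.sqrt b)^2)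
      ≤ Real.sqrt ((Real.sqrt a + Real.sqrt b)^2) := Real.sqrt_le_sqrt this
    _ = Real.sqrt a + Real.sqrt b := by
        rw [Real.sqrt_sq (by positivity)]

lemma abs_sqrt_sub (a b : ℝ) (ha : 0 ≤ a) (hb : 0 ≤ b) :
    |Real.sqrt a - Real.sqrt b| ≤ Real.sqrt |a - b| := by
  wlog hab : b ≤ a generalizing a b
  · rw [abs_sub_comm, abs_sub_comm a b]; exact this b a hb ha (le_of_not_ge hab)
  rw [abs_of_nonneg (sub_nonneg.2 (Real.sqrt_le_sqrt hab)),
    abs_of_nonneg (sub_nonneg.2 hab), sub_le_iff_le_add]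
  calc Real.sqrt a = Real.sqrt ((a - b) + b) := by ring_nf
    _ ≤ Real.sqrt (a - b) + Real.sqrt b := sqrt_subadd _ _ (by linarith) hb

/-- **Hölder smoothness of conditional kernel moments (Example 2).** -/
theorem conditional_kernel_moment_holder
    (κ : ℕ) (hκ : κ = 1 ∨ κ = 2) (h : ℝ) (hh : 0 < h) (x : ℝ)
    (Cinf L_G s : ℝ) (hCinf : 0 < Cinf) (hLG : 0 < L_G)
    (hs0 : 0 < s) (hs1 : s ≤ 1 / (κ : ℝ))
    (K : ℝ → ℝ) (hKmeas : Measurable K)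
    (hKint : Integrable (fun w => |K w| ^ (κ : ℕ)) (volume : Measure ℝ))
    (g : ℝ → ℝ → ℝ)
    (hg_meas : ∀ z, Measurable (g z))
    -- the `g_z` are probability densities …
    (hg_nonneg : ∀ z y, 0 ≤ g z y) (hg_prob : ∀ z, ∫ y, g z y = 1)
    -- … bounded by `C_∞` …
    (hg_bdd : ∀ z y, g z y ≤ Cinf)
    -- … and Lipschitz in `z` with constant `L_G`
    (hg_lip : ∀ y z z', |g z y - g z' y| ≤ L_G * |z - z'|) :
    ∀ z z' : ℝ,
      |(h ^ ((κ : ℝ)⁻¹ - 1/2) * (∫ w, K w ^ (κ : ℕ) * g z (x + w * h)) ^ ((κ : ℝ)⁻¹))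
        - (h ^ ((κ : ℝ)⁻¹ - 1/2) * (∫ w, K w ^ (κ : ℕ) * g z' (x + w * h)) ^ ((κ : ℝ)⁻¹))| ≤
      h ^ ((κ : ℝ)⁻¹ - 1/2) * (∫ w, |K w| ^ (κ : ℕ)) ^ ((κ : ℝ)⁻¹)
        * Cinf ^ ((κ : ℝ)⁻¹ - s) * L_G ^ s * |z - z'| ^ s := by
  intro z z'
  have hA : (0:ℝ) ≤ ∫ w, |K w| ^ (κ : ℕ) :=
    integral_nonneg fun w => pow_nonneg (abs_nonneg _) _
  have hkey := key_bound κ h x Cinf L_G K g hCinf hLG hKmeas hKint hg_meas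
    hg_nonneg hg_bdd hg_lip z z'
  -- trivial case z = z'
  rcases eq_or_ne z z' with rfl | hne
  · rw [sub_self, abs_zero]
    have : (0:ℝ) ≤ h ^ ((κ : ℝ)⁻¹ - 1/2) := Real.rpow_nonneg hh.le _
    exact mul_nonneg (mul_nonneg (mul_nonneg (mul_nonneg this
      (Real.rpow_nonneg hA _)) (Real.rpow_nonneg hCinf.le _))
      (Real.rpow_nonneg hLG.le _)) (Real.rpow_nonneg (abs_nonneg _) _)
  have hΔ : 0 < |z - z'| := abs_pos.2 (sub_ne_zero.2 hne)
  have hLΔ : 0 < L_G * |z - z'| := mul_pos hLG hΔ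
  rcases hκ with rfl | rfl
  · -- κ = 1
    have hs1' : s ≤ 1 := by norm_num at hs1; exact hs1
    simp only [Nat.cast_one, inv_one, Real.rpow_one, pow_one] at *
    rw [← mul_sub, abs_mul, abs_of_nonneg (Real.rpow_nonneg hh.le _)]
    have hmin := min_le_interp Cinf (L_G * |z - z'|) s hCinf hLΔ hs0.le hs1'
    have h2 : |(∫ w, K w * g z (x + w * h)) - ∫ w, K w * g z' (x + w * h)|
        ≤ (∫ w, |K w|) * (Cinf ^ (1 - s) * (L_G * |z - z'|) ^ s) :=
      hkey.trans (mul_le_mul_of_nonneg_left hmin hA)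
    calc h ^ ((1:ℝ) - 1/2) * |(∫ w, K w * g z (x + w * h)) - ∫ w, K w * g z' (x + w * h)|
        ≤ h ^ ((1:ℝ) - 1/2) * ((∫ w, |K w|) * (Cinf ^ (1 - s) * (L_G * |z - z'|) ^ s)) :=
          mul_le_mul_of_nonneg_left h2 (Real.rpow_nonneg hh.le _)
      _ = h ^ ((1:ℝ) - 1/2) * (∫ w, |K w|) * Cinf ^ (1 - s) * L_G ^ s * |z - z'| ^ s := by
          rw [Real.mul_rpow hLG.le hΔ.le]; ring
  · -- κ = 2
    have hs1' : 2 * s ≤ 1 := by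
      rw [show ((2:ℕ):ℝ) = 2 by norm_num] at hs1; linarith
    have hc : ((2:ℕ):ℝ)⁻¹ - 1/2 = 0 := by norm_num
    have hrt : ∀ t : ℝ, t ^ (((2:ℕ):ℝ))⁻¹ = Real.sqrt t := fun t => by
      rw [Real.sqrt_eq_rpow]; norm_num
    rw [hc, Real.rpow_zero, one_mul, one_mul, one_mul, hrt, hrt, hrt]
    have hIz : ∀ u : ℝ, (0:ℝ) ≤ ∫ w, K w ^ (2:ℕ) * g u (x + w * h) := fun u =>
      integral_nonneg fun w => mul_nonneg (by positivity) (hg_nonneg u _)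
    have hmin := min_le_interp Cinf (L_G * |z - z'|) (2*s) hCinf hLΔ (by linarith) hs1'
    calc |Real.sqrt (∫ w, K w ^ (2:ℕ) * g z (x + w * h))
            - Real.sqrt (∫ w, K w ^ (2:ℕ) * g z' (x + w * h))|
        ≤ Real.sqrt |(∫ w, K w ^ (2:ℕ) * g z (x + w * h))
            - ∫ w, K w ^ (2:ℕ) * g z' (x + w * h)| := abs_sqrt_sub _ _ (hIz z) (hIz z')
      _ ≤ Real.sqrt ((∫ w, |K w| ^ (2:ℕ)) * (Cinf ^ (1 - 2*s) * (L_G * |z - z'|) ^ (2*s))) :=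
          Real.sqrt_le_sqrt (hkey.trans (mul_le_mul_of_nonneg_left hmin hA))
      _ = Real.sqrt (∫ w, |K w| ^ (2:ℕ)) * Cinf ^ (((2:ℕ):ℝ)⁻¹ - s) * L_G ^ s * |z - z'| ^ s := by
          rw [Real.sqrt_mul hA, Real.sqrt_mul (Real.rpow_nonneg hCinf.le _),
            Real.sqrt_eq_rpow, Real.sqrt_eq_rpow, Real.sqrt_eq_rpow, ← Real.rpow_mul hCinf.le,
            ← Real.rpow_mul hLΔ.le, Real.mul_rpow hLG.le hΔ.le,
            show (1 - 2*s) * (1/2) = ((2:ℕ):ℝ)⁻¹ - s by push_cast; ring,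
            show 2*s*(1/2) = s by ring]
          ring
end
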